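/- Let G be a connected star graph not isomorphic to a diamond or a triangle, and let E_2(G) be the set of edges of G incident to at least one vertex of degree two. Then |E_2(G)| ≤ min{|V(G)| − 1, (4/7)|E(G)|}. -/

import Mathlib

open SimpleGraph

/-- An induced star of `H` with center `v` and leaf set `L`: `L` is a nonempty
independent set of neighbors of `v`. -/
def IsStar {V : Type*} (H : SimpleGraph V) (v : V) (L : Set V) : Prop :=
  L.Nonempty ∧ (∀ u ∈ L, H.Adj v u) ∧ ∀ u ∈ L, ∀ w ∈ L, ¬ H.Adj u w

/-- `S` is the vertex set of an induced star of `H`. -/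
def IsStarSet {V : Type*} (H : SimpleGraph V) (S : Set V) : Prop :=
  ∃ v L, IsStar H v L ∧ S = insert v L

/-- `S` is the vertex set of a maximal induced star of `H`. -/
def IsMaxStarSet {V : Type*} (H : SimpleGraph V) (S : Set V) : Prop :=
  IsStarSet H S ∧ ∀ T, IsStarSet H T → S ⊆ T → S = T

/-- The set of (vertex sets of) maximal induced stars of `H`. -/
def maxStars {V : Type*} (H : SimpleGraph V) : Set (Set V) := {S | IsMaxStarSet H S}

/-- The star graph of `H`: the intersection graph of the maximal induced stars of `H`. -/
def starGraph {V : Type*} (H : SimpleGraph V) : SimpleGraph ↥(maxStars H) :=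
  SimpleGraph.fromRel fun S T => ((S : Set V) ∩ (T : Set V)).Nonempty

/-- A vertex of `H` is star-critical if removing it changes the star graph up to
isomorphism; `H` is star-critical if all its vertices are. -/
def StarCritical {V : Type*} (H : SimpleGraph V) : Prop :=
  ∀ v : V, ¬ Nonempty (_root_.starGraph (H.induce ({v}ᶜ : Set V)) ≃g _root_.starGraph H)

/-- The diamond: `K₄` minus one edge. -/
def diamond : SimpleGraph (Fin 4) := (⊤ : SimpleGraph (Fin 4)).deleteEdges {s(0, 1)}

set_option linter.unusedSectionVars false

section Basics
variable {V : Type*} [Fintype V] {H : SimpleGraph V}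

/-- Any star set extends to a maximal star set. -/
lemma exists_maxStar_superset {S : Set V} (hS : IsStarSet H S) :
    ∃ M ∈ maxStars H, S ⊆ M := by
  classical
  obtain ⟨M, hM, hmax⟩ := Set.Finite.exists_maximalFor (id : Set V → Set V)
    {T | IsStarSet H T ∧ S ⊆ T} (Set.toFinite _) ⟨S, hS, subset_rfl⟩
  refine ⟨M, ⟨hM.1, fun T hT hMT => ?_⟩, hM.2⟩
  exact le_antisymm hMT (hmax ⟨hT, hM.2.trans hMT⟩ hMT)

/-- A single edge gives a star set. -/
lemma isStarSet_pair {a b : V} (h : H.Adj a b) : IsStarSet H {a, b} := by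
  refine ⟨a, {b}, ⟨⟨b, rfl⟩, ?_, ?_⟩, rfl⟩
  · rintro u rfl; exact h
  · rintro u rfl w rfl; simp

/-- A cherry (p adjacent to l1, l2 nonadjacent) gives a star set. -/
lemma isStarSet_cherry {p l1 l2 : V} (h1 : H.Adj p l1) (h2 : H.Adj p l2)
    (hne : l1 ≠ l2) (h3 : ¬ H.Adj l1 l2) : IsStarSet H {p, l1, l2} := by
  refine ⟨p, {l1, l2}, ⟨⟨l1, by simp⟩, ?_, ?_⟩, rfl⟩
  · rintro u (rfl | rfl) <;> assumption
  · rintro u hu w hw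
    rcases hu with rfl | rfl <;> rcases hw with rfl | rfl
    · simp
    · exact h3
    · exact fun hc => h3 hc.symm
    · simp

/-- every edge lies in some maximal star. -/
lemma edge_mem_maxStar {a b : V} (h : H.Adj a b) :
    ∃ M ∈ maxStars H, a ∈ M ∧ b ∈ M := by
  obtain ⟨M, hM, hsub⟩ := exists_maxStar_superset (isStarSet_pair h)
  exact ⟨M, hM, hsub (by simp), hsub (by simp)⟩

/-- every cherry lies in some maximal star. -/
lemma cherry_mem_maxStar {p l1 l2 : V} (h1 : H.Adj p l1) (h2 : H.Adj p l2)
    (hne : l1 ≠ l2) (h3 : ¬ H.Adj l1 l2) :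
    ∃ M ∈ maxStars H, p ∈ M ∧ l1 ∈ M ∧ l2 ∈ M := by
  obtain ⟨M, hM, hsub⟩ := exists_maxStar_superset (isStarSet_cherry h1 h2 hne h3)
  exact ⟨M, hM, hsub (by simp), hsub (by simp), hsub (by simp)⟩

/-- Internal edges of a star touch the center. -/
lemma star_internal {v : V} {L : Set V} (h : IsStar H v L) {x y : V}
    (hx : x ∈ insert v L) (hy : y ∈ insert v L) (hadj : H.Adj x y) :
    x = v ∨ y = v := by
  rcases hx with rfl | hx
  · exact Or.inl rfl
  rcases hy with rfl | hy
  · exact Or.inr rfl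
  exact absurd hadj (h.2.2 x hx y hy)

/-- Every vertex of a star set has a neighbour inside it. -/
lemma star_exists_adj {v : V} {L : Set V} (h : IsStar H v L) {x : V}
    (hx : x ∈ insert v L) : ∃ y ∈ insert v L, H.Adj x y := by
  rcases hx with rfl | hx
  · obtain ⟨u, hu⟩ := h.1
    exact ⟨u, Set.mem_insert_of_mem _ hu, h.2.1 u hu⟩
  · exact ⟨v, Set.mem_insert _ _, (h.2.1 x hx).symm⟩

/-- Maximality (K1): an outside neighbour of the center is adjacent to a leaf. -/
lemma center_blocked {S : Set V} (hS : S ∈ maxStars H) {v : V} {L : Set V}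
    (hstar : IsStar H v L) (hrep : S = insert v L) {w : V}
    (hadj : H.Adj v w) (hw : w ∉ S) : ∃ x ∈ L, H.Adj x w := by
  by_contra hcon
  push_neg at hcon
  have hwv : w ≠ v := fun h => (H.ne_of_adj hadj) h.symm
  have hstar' : IsStarSet H (insert v (insert w L)) := by
    refine ⟨v, insert w L, ⟨⟨w, by simp⟩, ?_, ?_⟩, rfl⟩
    · rintro u (rfl | hu); · exact hadj
      · exact hstar.2.1 u hu
    · rintro u (rfl | hu) z (rfl | hz)
      · simp
      · exact fun hc => hcon z hz hc.symm
      · exact fun hc => hcon u hu hc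
      · exact hstar.2.2 u hu z hz
  have hsub : S ⊆ insert v (insert w L) := by
    rw [hrep]; exact Set.insert_subset_insert (Set.subset_insert _ _)
  have := hS.2 _ hstar' hsub
  apply hw
  rw [hrep] at this ⊢
  rw [this]; simp
end Basics

/-- Configuration around a degree-two vertex `S` of the star graph, with
neighbours `T` and `R`. -/
structure Deg2Cfg {V : Type*} (H : SimpleGraph V) (S T R : Set V) : Prop where
  hS : S ∈ maxStars H
  hT : T ∈ maxStars H
  hR : R ∈ maxStars H
  tS : T ≠ S
  rS : R ≠ S
  tR : T ≠ R
  tMeet : (T ∩ S).Nonempty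
  rMeet : (R ∩ S).Nonempty
  closed : ∀ M ∈ maxStars H, (M ∩ S).Nonempty → M = S ∨ M = T ∨ M = R

section Deg2
variable {V : Type*} [Fintype V] {H : SimpleGraph V} {S T R : Set V}

lemma Deg2Cfg.symm (h : Deg2Cfg H S T R) : Deg2Cfg H S R T :=
  ⟨h.hS, h.hR, h.hT, h.rS, h.tS, h.tR.symm, h.rMeet, h.tMeet,
    fun M hM hMS => by rcases h.closed M hM hMS with h1 | h1 | h1 <;> tauto⟩

/-- Any max star containing a vertex of `S` is `S`, `T` or `R`. -/
lemma Deg2Cfg.mem_closed (h : Deg2Cfg H S T R) {M : Set V} (hM : M ∈ maxStars H)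
    {x : V} (hxM : x ∈ M) (hxS : x ∈ S) : M = S ∨ M = T ∨ M = R :=
  h.closed M hM ⟨x, hxM, hxS⟩

/-- Any edge at a vertex of `S` lies inside `S`, `T` or `R`. -/
lemma Deg2Cfg.edge_closed (h : Deg2Cfg H S T R) {x y : V} (hxS : x ∈ S)
    (hadj : H.Adj x y) :
    ∃ M, (M = S ∨ M = T ∨ M = R) ∧ x ∈ M ∧ y ∈ M := by
  obtain ⟨M, hM, hx, hy⟩ := edge_mem_maxStar hadj
  exact ⟨M, h.mem_closed hM hx hxS, hx, hy⟩

/-- Any cherry at a vertex of `S` lies inside `S`, `T` or `R`. -/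
lemma Deg2Cfg.cherry_closed (h : Deg2Cfg H S T R) {p l1 l2 : V}
    (hp : p ∈ S ∨ l1 ∈ S ∨ l2 ∈ S)
    (h1 : H.Adj p l1) (h2 : H.Adj p l2) (hne : l1 ≠ l2) (h3 : ¬ H.Adj l1 l2) :
    ∃ M, (M = S ∨ M = T ∨ M = R) ∧ p ∈ M ∧ l1 ∈ M ∧ l2 ∈ M := by
  obtain ⟨M, hM, hp', h1', h2'⟩ := cherry_mem_maxStar h1 h2 hne h3
  rcases hp with hs | hs | hs
  · exact ⟨M, h.mem_closed hM hp' hs, hp', h1', h2'⟩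
  · exact ⟨M, h.mem_closed hM h1' hs, hp', h1', h2'⟩
  · exact ⟨M, h.mem_closed hM h2' hs, hp', h1', h2'⟩

/-- Prop 1 : the center of (any representation of) `S` lies in `T ∪ R`. -/
lemma Deg2Cfg.center_mem (h : Deg2Cfg H S T R) {v : V} {L : Set V}
    (hstar : IsStar H v L) (hrep : S = insert v L) : v ∈ T ∨ v ∈ R := by
  by_contra hcon
  push_neg at hcon
  obtain ⟨hvT, hvR⟩ := hcon
  have hvS : v ∈ S := by rw [hrep]; exact Set.mem_insert _ _
  -- every H-neighbour of v lies in S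
  have hnbr : ∀ y, H.Adj v y → y ∈ S := by
    intro y hy
    obtain ⟨M, hMor, hvM, hyM⟩ := h.edge_closed hvS hy
    rcases hMor with rfl | rfl | rfl
    · exact hyM
    · exact absurd hvM hvT
    · exact absurd hvM hvR
  -- pick x ∈ T ∩ S ; it is a leaf
  obtain ⟨x, hxT, hxS⟩ := h.tMeet
  have hxL : x ∈ L := by
    rw [hrep] at hxS
    rcases hxS with rfl | hxL
    · exact absurd hxT hvT
    · exact hxL
  -- x has a neighbour y inside T
  obtain ⟨cT, LT, hstarT, hrepT⟩ := h.hT.1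
  obtain ⟨y, hyT, hxy⟩ := star_exists_adj hstarT (by rwa [← hrepT])
  rw [← hrepT] at hyT
  have hyS : y ∉ S := by
    intro hyS
    rw [hrep] at hyS
    rcases hyS with rfl | hyL
    · exact hvT hyT
    · exact hstar.2.2 x hxL y hyL hxy
  have hyv : y ≠ v := fun hc => hyS (hc ▸ hvS)
  have hvy : ¬ H.Adj v y := fun hc => hyS (hnbr y hc)
  -- cherry (x; v, y)
  obtain ⟨M, hMor, hxM, hvM, hyM⟩ :=
    h.cherry_closed (Or.inr (Or.inl hvS)) ((hstar.2.1 x hxL).symm) hxy hyv.symm hvy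
  rcases hMor with rfl | rfl | rfl
  · exact hyS hyM
  · exact hvT hvM
  · exact hvR hvM

/-- F3, asymmetric version: if the center lies in `T` then `T` meets `R`. -/
lemma Deg2Cfg.meet_of_center (h : Deg2Cfg H S T R) {v : V} {L : Set V}
    (hstar : IsStar H v L) (hrep : S = insert v L) (hvT : v ∈ T) :
    (T ∩ R).Nonempty := by
  by_contra hcon
  rw [Set.not_nonempty_iff_eq_empty] at hcon
  have hvR : v ∉ R := fun hvR =>
    (Set.eq_empty_iff_forall_notMem.1 hcon v) ⟨hvT, hvR⟩
  have hvS : v ∈ S := by rw [hrep]; exact Set.mem_insert _ _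
  obtain ⟨x, hxR, hxS⟩ := h.rMeet
  have hxL : x ∈ L := by
    rw [hrep] at hxS
    rcases hxS with rfl | hxL
    · exact absurd hxR hvR
    · exact hxL
  obtain ⟨cR, LR, hstarR, hrepR⟩ := h.hR.1
  obtain ⟨y, hyR, hxy⟩ := star_exists_adj hstarR (by rwa [← hrepR])
  rw [← hrepR] at hyR
  have hyS : y ∉ S := by
    intro hyS
    rw [hrep] at hyS
    rcases hyS with rfl | hyL
    · exact hvR hyR
    · exact hstar.2.2 x hxL y hyL hxy
  have hyv : y ≠ v := fun hc => hyS (hc ▸ hvS)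
  by_cases hvy : H.Adj v y
  · obtain ⟨M, hMor, hvM, hyM⟩ := h.edge_closed hvS hvy
    rcases hMor with rfl | rfl | rfl
    · exact hyS hyM
    · exact (Set.eq_empty_iff_forall_notMem.1 hcon y) ⟨hyM, hyR⟩
    · exact hvR hvM
  · obtain ⟨M, hMor, hxM, hvM, hyM⟩ :=
      h.cherry_closed (Or.inr (Or.inl hvS)) ((hstar.2.1 x hxL).symm) hxy hyv.symm hvy
    rcases hMor with rfl | rfl | rfl
    · exact hyS hyM
    · exact (Set.eq_empty_iff_forall_notMem.1 hcon y) ⟨hyM, hyR⟩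
    · exact hvR hvM

/-- F3 : `T` and `R` intersect. -/
lemma Deg2Cfg.nbrs_meet (h : Deg2Cfg H S T R)  : (T ∩ R).Nonempty := by
  obtain ⟨v, L, hstar, hrep⟩ := h.hS.1
  rcases h.center_mem hstar hrep with hvT | hvR
  · exact h.meet_of_center hstar hrep hvT
  · obtain ⟨z, h1, h2⟩ := h.symm.meet_of_center hstar hrep hvR
    exact ⟨z, h2, h1⟩

end Deg2

section Layer2
variable {V : Type*} [Fintype V] {H : SimpleGraph V} {S T R : Set V}

/-- The center of (any representation of) the third star `R` lies in `S ∪ T`. -/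
lemma Deg2Cfg.third_center_mem (h : Deg2Cfg H S T R) {v cR : V} {L MR : Set V}
    (hstarS : IsStar H v L) (hrepS : S = insert v L)
    (hstarR : IsStar H cR MR) (hrepR : R = insert cR MR) : cR ∈ S ∨ cR ∈ T := by
  by_contra hcon
  push_neg at hcon
  obtain ⟨hcS, hcT⟩ := hcon
  have hvS : v ∈ S := by rw [hrepS]; exact Set.mem_insert _ _
  have hmemMR : ∀ z, z ∈ R → z ∈ S → z ∈ MR := by
    intro z hzR hzS
    rw [hrepR] at hzR
    rcases hzR with rfl | hzM
    · exact absurd hzS hcS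
    · exact hzM
  have blocked : H.Adj v cR → False := by
    intro hvc
    have hvMR : v ∈ MR := by
      obtain ⟨M, hMor, hvM, hcM⟩ := h.edge_closed hvS hvc
      rcases hMor with rfl | rfl | rfl
      · exact absurd hcM hcS
      · exact absurd hcM hcT
      · exact hmemMR v hvM hvS
    obtain ⟨x, hxL, hxc⟩ := center_blocked h.hS hstarS hrepS hvc hcS
    have hxS : x ∈ S := by rw [hrepS]; exact Set.mem_insert_of_mem _ hxL
    obtain ⟨M, hMor, hxM, hcM⟩ := h.edge_closed hxS hxc
    rcases hMor with rfl | rfl | rfl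
    · exact absurd hcM hcS
    · exact absurd hcM hcT
    · exact hstarR.2.2 v hvMR x (hmemMR x hxM hxS) (hstarS.2.1 x hxL)
  obtain ⟨y, hyR, hyS⟩ := h.rMeet
  have hady : H.Adj cR y := hstarR.2.1 y (hmemMR y hyR hyS)
  have hyS' := hyS
  rw [hrepS] at hyS'
  rcases hyS' with rfl | hyL
  · exact blocked hady.symm
  · by_cases hvc : H.Adj v cR
    · exact blocked hvc
    · have hvy : H.Adj y v := (hstarS.2.1 y hyL).symm
      have hvcne : v ≠ cR := fun hc => hcS (hc ▸ hvS)
      obtain ⟨M, hM, hyM, hvM, hcM⟩ := cherry_mem_maxStar hvy hady.symm hvcne hvc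
      rcases h.mem_closed hM hyM hyS with rfl | rfl | rfl
      · exact hcS hcM
      · exact hcT hcM
      · exact hstarR.2.2 v (hmemMR v hvM hvS) y (hmemMR y hyM hyS)
          (hstarS.2.1 y hyL)

/-- No two adjacent degree-two vertices in the star graph (H-level). -/
lemma no_adjacent_deg2 (hST : Deg2Cfg H S T R) (hTS : Deg2Cfg H T S R)
    {Q : Set V} (hQ : Q ∈ maxStars H) (hQS : ∀ z ∈ Q, z ∉ S)
    (hQT : ∀ z ∈ Q, z ∉ T) (hQR : (Q ∩ R).Nonempty) : False := by
  obtain ⟨v, L, hstarS, hrepS⟩ := hST.hS.1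
  obtain ⟨cR, MR, hstarR, hrepR⟩ := hST.hR.1
  have hcU : cR ∈ S ∨ cR ∈ T := hST.third_center_mem hstarS hrepS hstarR hrepR
  obtain ⟨z, hzQ, hzR⟩ := hQR
  have hzS : z ∉ S := hQS z hzQ
  have hzT : z ∉ T := hQT z hzQ
  have hzMR : z ∈ MR := by
    rw [hrepR] at hzR
    rcases hzR with rfl | h'
    · rcases hcU with h' | h' <;> [exact absurd h' hzS; exact absurd h' hzT]
    · exact h'
  have hadz : H.Adj cR z := hstarR.2.1 z hzMR
  obtain ⟨cQ, MQ, hstarQ, hrepQ⟩ := hQ.1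
  obtain ⟨q, hqQ, hzq⟩ := star_exists_adj hstarQ (by rw [← hrepQ]; exact hzQ)
  rw [← hrepQ] at hqQ
  have hqS : q ∉ S := hQS q hqQ
  have hqT : q ∉ T := hQT q hqQ
  have hqR : q ∉ R := by
    intro hqR
    rw [hrepR] at hqR
    rcases hqR with rfl | hqM
    · rcases hcU with h' | h' <;> [exact hqS h'; exact hqT h']
    · exact hstarR.2.2 z hzMR q hqM hzq
  have closed2 : ∀ M ∈ maxStars H, cR ∈ M → M = S ∨ M = T ∨ M = R := by
    intro M hM hcM
    rcases hcU with h' | h'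
    · exact hST.mem_closed hM hcM h'
    · rcases hTS.mem_closed hM hcM h' with h1 | h1 | h1 <;> tauto
  by_cases hcq : H.Adj cR q
  · obtain ⟨M, hM, hcM, hqM⟩ := edge_mem_maxStar hcq
    rcases closed2 M hM hcM with rfl | rfl | rfl
    · exact hqS hqM
    · exact hqT hqM
    · exact hqR hqM
  · have hcqne : cR ≠ q := by
      rintro rfl
      rcases hcU with h' | h' <;> [exact hqS h'; exact hqT h']
    obtain ⟨M, hM, hzM, hcM, hqM⟩ := cherry_mem_maxStar hadz.symm hzq hcqne hcq
    rcases closed2 M hM hcM with rfl | rfl | rfl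
    · exact hzS hzM
    · exact hzT hzM
    · exact hqR hqM

end Layer2

section Layer3
variable {V : Type*} [Fintype V] {H : SimpleGraph V} {S T R : Set V}

/-- If `S` is a degree-two star whose center lies in its neighbour `T`, then no
maximal star `A` disjoint from both `S` and `R` can meet `T`. -/
lemma cross_kill (h : Deg2Cfg H S T R) {v : V} {L : Set V}
    (hstarS : IsStar H v L) (hrepS : S = insert v L) (hvT : v ∈ T)
    {A : Set V} (hA : A ∈ maxStars H) (hAS : ∀ z ∈ A, z ∉ S)
    (hAR : ∀ z ∈ A, z ∉ R) (hAT : (A ∩ T).Nonempty) : False := by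
  have hvS : v ∈ S := by rw [hrepS]; exact Set.mem_insert _ _
  have key : ∀ M ∈ maxStars H, ∀ x ∈ M, x ∈ S → ∀ a ∈ M, a ∈ A → M = T := by
    intro M hM x hxM hxS a haM haA
    rcases h.mem_closed hM hxM hxS with h1 | h1 | h1
    · exact absurd (h1 ▸ haM) (hAS a haA)
    · exact h1
    · exact absurd (h1 ▸ haM) (hAR a haA)
  obtain ⟨t, htA, htT⟩ := hAT
  obtain ⟨c, MT, hstarT, hrepT⟩ := h.hT.1
  obtain ⟨cA, LA, hstarA, hrepA⟩ := hA.1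
  obtain ⟨s, hsA, hts⟩ := star_exists_adj hstarA (by rw [← hrepA]; exact htA)
  rw [← hrepA] at hsA
  have htS : t ∉ S := hAS t htA
  have hsS : s ∉ S := hAS s hsA
  have htv : t ≠ v := fun hc => htS (hc ▸ hvS)
  by_cases hcv : c = v
  · -- Case I : T is centered at v
    rw [hcv] at hstarT hrepT
    have htMT : t ∈ MT := by
      rw [hrepT] at htT
      rcases htT with rfl | h'
      · exact absurd hvS htS
      · exact h'
    have hsT : s ∉ T := by
      intro hsT
      rw [hrepT] at hsT
      rcases hsT with rfl | hsMT
      · exact hsS hvS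
      · exact hstarT.2.2 t htMT s hsMT hts
    have hvs : ¬ H.Adj v s := by
      intro hadj
      obtain ⟨M, hM, hvM, hsM⟩ := edge_mem_maxStar hadj
      exact hsT ((key M hM v hvM hvS s hsM hsA) ▸ hsM)
    have hvsne : v ≠ s := fun hc => hsS (hc ▸ hvS)
    obtain ⟨M, hM, htM, hvM, hsM⟩ :=
      cherry_mem_maxStar (hstarT.2.1 t htMT).symm hts hvsne hvs
    exact hsT ((key M hM v hvM hvS t htM htA) ▸ hsM)
  · -- v is a leaf of T
    have hvMT : v ∈ MT := by
      rw [hrepT] at hvT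
      rcases hvT with rfl | h'
      · exact absurd rfl hcv
      · exact h'
    have hadcv : H.Adj c v := hstarT.2.1 v hvMT
    by_cases htc : t = c
    · -- T centered at t ∈ A
      have hadtv : H.Adj v t := by rw [htc]; exact hadcv.symm
      obtain ⟨x, hxL, hxt⟩ := center_blocked h.hS hstarS hrepS hadtv htS
      have hxS : x ∈ S := by rw [hrepS]; exact Set.mem_insert_of_mem _ hxL
      obtain ⟨M, hM, hxM, htM⟩ := edge_mem_maxStar hxt
      have hMT := key M hM x hxM hxS t htM htA
      rw [hMT, hrepT] at hxM
      rcases hxM with h' | hxMT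
      · exact htS ((htc.trans h'.symm) ▸ hxS)
      · exact hstarT.2.2 x hxMT v hvMT (hstarS.2.1 x hxL).symm
    · have htMT : t ∈ MT := by
        rw [hrepT] at htT
        rcases htT with rfl | h'
        · exact absurd rfl htc
        · exact h'
      by_cases hcA : c ∈ A
      · -- center of T inside A
        obtain ⟨x, hxL, hxc⟩ := center_blocked h.hS hstarS hrepS hadcv.symm (hAS c hcA)
        have hxS : x ∈ S := by rw [hrepS]; exact Set.mem_insert_of_mem _ hxL
        obtain ⟨M, hM, hxM, hcM⟩ := edge_mem_maxStar hxc
        have hMT := key M hM x hxM hxS c hcM hcA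
        rw [hMT, hrepT] at hxM
        rcases hxM with h' | hxMT
        · exact (hAS c hcA) (h' ▸ hxS)
        · exact hstarT.2.2 x hxMT v hvMT (hstarS.2.1 x hxL).symm
      by_cases hcS : c ∈ S
      · -- center of T is a leaf of S
        have hsT : s ∉ T := by
          intro hsT
          rw [hrepT] at hsT
          rcases hsT with rfl | hsMT
          · exact hcA hsA
          · exact hstarT.2.2 t htMT s hsMT hts
        have hcs : ¬ H.Adj c s := by
          intro hadj
          obtain ⟨M, hM, hcM, hsM⟩ := edge_mem_maxStar hadj
          exact hsT ((key M hM c hcM hcS s hsM hsA) ▸ hsM)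
        have hcsne : c ≠ s := fun hc => hsS (hc ▸ hcS)
        obtain ⟨M, hM, htM, hcM, hsM⟩ :=
          cherry_mem_maxStar (hstarT.2.1 t htMT).symm hts hcsne hcs
        exact hsT ((key M hM c hcM hcS t htM htA) ▸ hsM)
      · -- center of T outside S ∪ A
        obtain ⟨x, hxL, hxc⟩ := center_blocked h.hS hstarS hrepS hadcv.symm hcS
        have hxS : x ∈ S := by rw [hrepS]; exact Set.mem_insert_of_mem _ hxL
        have hxT : x ∉ T := by
          intro hxT
          rw [hrepT] at hxT
          rcases hxT with rfl | hxMT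
          · exact hcS hxS
          · exact hstarT.2.2 x hxMT v hvMT (hstarS.2.1 x hxL).symm
        have hxt : ¬ H.Adj x t := by
          intro hadj
          obtain ⟨M, hM, hxM, htM⟩ := edge_mem_maxStar hadj
          exact hxT ((key M hM x hxM hxS t htM htA) ▸ hxM)
        have hxtne : x ≠ t := fun hc => htS (hc ▸ hxS)
        obtain ⟨M, hM, hcM, hxM, htM⟩ :=
          cherry_mem_maxStar hxc.symm (hstarT.2.1 t htMT) hxtne hxt
        exact hxT ((key M hM x hxM hxS t htM htA) ▸ hxM)

end Layer3

section Layer4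
variable {V : Type*} [Fintype V] {H : SimpleGraph V} {S A T R : Set V}

/-- membership in a star set away from the center is a leaf. -/
lemma leaf_of_ne {c x : V} {M W : Set V} (hrep : W = insert c M) (hx : x ∈ W)
    (hne : x ≠ c) : x ∈ M := by
  rw [hrep] at hx
  rcases hx with rfl | h
  · exact absurd rfl hne
  · exact h

/-- Case 1a of the twin lemma: `v, w ∈ T` and `T` is centered at `v`. -/
lemma d_core1a (hS : Deg2Cfg H S T R) (hA : Deg2Cfg H A T R)
    (disj : ∀ z ∈ A, z ∉ S)
    {v w cR : V} {L LA MT MR : Set V}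
    (hstarS : IsStar H v L) (hrepS : S = insert v L)
    (hstarA : IsStar H w LA) (hrepA : A = insert w LA)
    (hstarT : IsStar H v MT) (hrepT : T = insert v MT)
    (hstarR : IsStar H cR MR) (hrepR : R = insert cR MR)
    (hwT : w ∈ T) : False := by
  have hvS : v ∈ S := by rw [hrepS]; exact Set.mem_insert _ _
  have hwA : w ∈ A := by rw [hrepA]; exact Set.mem_insert _ _
  have hwS : w ∉ S := disj w hwA
  have hwv : w ≠ v := fun hc => hwS (hc ▸ hvS)
  have hwMT : w ∈ MT := leaf_of_ne hrepT hwT hwv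
  have hadvw : H.Adj v w := hstarT.2.1 w hwMT
  obtain ⟨a, haLA⟩ := hstarA.1
  have haA : a ∈ A := by rw [hrepA]; exact Set.mem_insert_of_mem _ haLA
  have haS : a ∉ S := disj a haA
  have hadwa : H.Adj w a := hstarA.2.1 a haLA
  have haT : a ∉ T := by
    intro haT
    have hav : a ≠ v := fun hc => haS (hc ▸ hvS)
    exact hstarT.2.2 w hwMT a (leaf_of_ne hrepT haT hav) hadwa
  -- v and a both lie in R
  have hvaR : v ∈ R ∧ a ∈ R := by
    by_cases hva : H.Adj v a
    · obtain ⟨M, hM, hvM, haM⟩ := edge_mem_maxStar hva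
      rcases hS.mem_closed hM hvM hvS with rfl | rfl | rfl
      · exact absurd hvM (fun _ => haS haM)
      · exact absurd haM haT
      · exact ⟨hvM, haM⟩
    · have hvane : v ≠ a := fun hc => haS (hc ▸ hvS)
      obtain ⟨M, hM, hwM, hvM, haM⟩ := cherry_mem_maxStar hadvw.symm hadwa hvane hva
      rcases hS.mem_closed hM hvM hvS with rfl | rfl | rfl
      · exact absurd hwM hwS
      · exact absurd haM haT
      · exact ⟨hvM, haM⟩
  -- a leaf x of S adjacent to w, with x, w ∈ R
  obtain ⟨x, hxL, hxw⟩ := center_blocked hS.hS hstarS hrepS hadvw hwS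
  have hxS : x ∈ S := by rw [hrepS]; exact Set.mem_insert_of_mem _ hxL
  have hxwR : x ∈ R ∧ w ∈ R := by
    obtain ⟨M, hM, hxM, hwM⟩ := edge_mem_maxStar hxw
    rcases hS.mem_closed hM hxM hxS with rfl | rfl | rfl
    · exact absurd hwM hwS
    · exact absurd hxw (hstarT.2.2 x (leaf_of_ne hrepT hxM (hstarS.2.1 x hxL).ne') w hwMT)
    · exact ⟨hxM, hwM⟩
  -- center of R among the internal edges
  have c1 := star_internal hstarR (by rw [← hrepR]; exact hvaR.1)
      (by rw [← hrepR]; exact hxwR.1) (hstarS.2.1 x hxL)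
  have c2 := star_internal hstarR (by rw [← hrepR]; exact hxwR.1)
      (by rw [← hrepR]; exact hxwR.2) hxw
  have c3 := star_internal hstarR (by rw [← hrepR]; exact hxwR.2)
      (by rw [← hrepR]; exact hvaR.2) hadwa
  have hxa : x ≠ a := fun hc => haS (hc ▸ hxS)
  have hxw' : x ≠ w := fun hc => hwS (hc ▸ hxS)
  rcases c2 with hc | hc
  · rcases c3 with hc' | hc'
    · exact hxw' (hc.trans hc'.symm)
    · exact hxa (hc.trans hc'.symm)
  · rcases c1 with hc' | hc'
    · exact hwv (hc.trans hc'.symm)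
    · exact hxw' (hc'.trans hc.symm)

/-- Case 1b-iii of the twin lemma: `v, w` leaves of `T`, center of `T` outside `S ∪ A`. -/
lemma d_core1biii (hS : Deg2Cfg H S T R) (hA : Deg2Cfg H A T R)
    (disj : ∀ z ∈ A, z ∉ S)
    {v w cT cR : V} {L LA MT MR : Set V}
    (hstarS : IsStar H v L) (hrepS : S = insert v L)
    (hstarA : IsStar H w LA) (hrepA : A = insert w LA)
    (hstarT : IsStar H cT MT) (hrepT : T = insert cT MT)
    (hstarR : IsStar H cR MR) (hrepR : R = insert cR MR)
    (hvMT : v ∈ MT) (hwMT : w ∈ MT) (hcS : cT ∉ S) (hcA : cT ∉ A) : False := by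
  have hvS : v ∈ S := by rw [hrepS]; exact Set.mem_insert _ _
  have hwA : w ∈ A := by rw [hrepA]; exact Set.mem_insert _ _
  have hadcv : H.Adj cT v := hstarT.2.1 v hvMT
  have hadcw : H.Adj cT w := hstarT.2.1 w hwMT
  -- leaf x of S adjacent to cT, with x ∉ T and x, cT ∈ R
  obtain ⟨x, hxL, hxc⟩ := center_blocked hS.hS hstarS hrepS hadcv.symm hcS
  have hxS : x ∈ S := by rw [hrepS]; exact Set.mem_insert_of_mem _ hxL
  have hadvx : H.Adj v x := hstarS.2.1 x hxL
  have hxT : x ∉ T := by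
    intro hxT
    have hxc' : x ≠ cT := fun hc => hcS (hc ▸ hxS)
    exact hstarT.2.2 v hvMT x (leaf_of_ne hrepT hxT hxc') hadvx
  have hxcR : x ∈ R ∧ cT ∈ R := by
    obtain ⟨M, hM, hxM, hcM⟩ := edge_mem_maxStar hxc
    rcases hS.mem_closed hM hxM hxS with rfl | rfl | rfl
    · exact absurd hcM hcS
    · exact absurd hxM hxT
    · exact ⟨hxM, hcM⟩
  -- leaf a of A adjacent to cT, with a ∉ T and a, cT ∈ R
  obtain ⟨a, haLA, hac⟩ := center_blocked hA.hS hstarA hrepA hadcw.symm hcA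
  have haA : a ∈ A := by rw [hrepA]; exact Set.mem_insert_of_mem _ haLA
  have hadwa : H.Adj w a := hstarA.2.1 a haLA
  have haT : a ∉ T := by
    intro haT
    have hac' : a ≠ cT := fun hc => hcA (hc ▸ haA)
    exact hstarT.2.2 w hwMT a (leaf_of_ne hrepT haT hac') hadwa
  have hacR : a ∈ R ∧ cT ∈ R := by
    obtain ⟨M, hM, haM, hcM⟩ := edge_mem_maxStar hac
    rcases hA.mem_closed hM haM haA with rfl | rfl | rfl
    · exact absurd hcM hcA
    · exact absurd haM haT
    · exact ⟨haM, hcM⟩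
  -- the center of R is cT
  have hcRcT : cR = cT := by
    have c1 := star_internal hstarR (by rw [← hrepR]; exact hxcR.1)
        (by rw [← hrepR]; exact hxcR.2) hxc
    have c2 := star_internal hstarR (by rw [← hrepR]; exact hacR.1)
        (by rw [← hrepR]; exact hacR.2) hac
    rcases c1 with hc | hc
    · rcases c2 with hc' | hc'
      · exact absurd ((hc'.trans hc.symm) ▸ hxS) (disj a haA)
      · exact hc'.symm
    · exact hc.symm
  have hxMR : x ∈ MR := leaf_of_ne hrepR hxcR.1 (fun hc => hcS ((hcRcT ▸ hc) ▸ hxS))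
  have haMR : a ∈ MR := leaf_of_ne hrepR hacR.1 (fun hc => hcA ((hcRcT ▸ hc) ▸ haA))
  -- v ∉ R
  have hvR : v ∉ R := by
    intro hvR
    have hvMR : v ∈ MR := leaf_of_ne hrepR hvR (fun hc => hcS ((hcRcT ▸ hc) ▸ hvS))
    exact hstarR.2.2 v hvMR x hxMR hadvx
  -- ¬ Adj v a
  have hva : ¬ H.Adj v a := by
    intro hva
    obtain ⟨M, hM, hvM, haM⟩ := edge_mem_maxStar hva
    rcases hS.mem_closed hM hvM hvS with rfl | rfl | rfl
    · exact disj a haA haM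
    · exact haT haM
    · exact hvR hvM
  have hvane : v ≠ a := fun hc => (disj a haA) (hc ▸ hvS)
  obtain ⟨M, hM, hcM, hvM, haM⟩ := cherry_mem_maxStar hadcv hac.symm hvane hva
  rcases hS.mem_closed hM hvM hvS with rfl | rfl | rfl
  · exact disj a haA haM
  · exact haT haM
  · exact hvR hvM

end Layer4

section Layer5
variable {V : Type*} [Fintype V] {H : SimpleGraph V} {S A T R Q : Set V}

/-- Case 1b-i of the twin lemma: `v, w` leaves of `T`, center of `T` is a leaf of `S`. -/
lemma d_core1bi (hS : Deg2Cfg H S T R) (hA : Deg2Cfg H A T R)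
    (disj : ∀ z ∈ A, z ∉ S)
    {v w cT cR : V} {L LA MT MR : Set V}
    (hstarS : IsStar H v L) (hrepS : S = insert v L)
    (hstarA : IsStar H w LA) (hrepA : A = insert w LA)
    (hstarT : IsStar H cT MT) (hrepT : T = insert cT MT)
    (hstarR : IsStar H cR MR) (hrepR : R = insert cR MR)
    (hvMT : v ∈ MT) (hwMT : w ∈ MT) (hcL : cT ∈ L)
    (hQ : Q ∈ maxStars H) (hQS : ∀ z ∈ Q, z ∉ S) (hQA : ∀ z ∈ Q, z ∉ A)
    (hQTR : ∃ z ∈ Q, z ∈ T ∨ z ∈ R) : False := by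
  have hvS : v ∈ S := by rw [hrepS]; exact Set.mem_insert _ _
  have hwA : w ∈ A := by rw [hrepA]; exact Set.mem_insert _ _
  have hcS : cT ∈ S := by rw [hrepS]; exact Set.mem_insert_of_mem _ hcL
  have hcA : cT ∉ A := fun h => disj cT h hcS
  have hadcv : H.Adj cT v := hstarT.2.1 v hvMT
  have hadcw : H.Adj cT w := hstarT.2.1 w hwMT
  obtain ⟨a, haLA, haadj⟩ := center_blocked hA.hS hstarA hrepA hadcw.symm hcA
  have haA : a ∈ A := by rw [hrepA]; exact Set.mem_insert_of_mem _ haLA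
  have haS : a ∉ S := disj a haA
  have hadwa : H.Adj w a := hstarA.2.1 a haLA
  have haT : a ∉ T := by
    intro haT
    have : a ≠ cT := fun hc => haS (hc ▸ hcS)
    exact hstarT.2.2 w hwMT a (leaf_of_ne hrepT haT this) hadwa
  have hacR : a ∈ R ∧ cT ∈ R := by
    obtain ⟨M, hM, haM, hcM⟩ := edge_mem_maxStar haadj
    rcases hA.mem_closed hM haM haA with rfl | rfl | rfl
    · exact absurd hcM hcA
    · exact absurd haM haT
    · exact ⟨haM, hcM⟩
  have hacT : a ≠ cT := fun hc => haS (hc ▸ hcS)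
  have hvcT : v ≠ cT := hadcv.ne'
  by_cases hva : H.Adj v a
  · -- branch 1, no Q needed
    have hvaR : v ∈ R ∧ a ∈ R := by
      obtain ⟨M, hM, hvM, haM⟩ := edge_mem_maxStar hva
      rcases hS.mem_closed hM hvM hvS with rfl | rfl | rfl
      · exact absurd haM haS
      · exact absurd haM haT
      · exact ⟨hvM, haM⟩
    have c1 := star_internal hstarR (by rw [← hrepR]; exact hvaR.1)
        (by rw [← hrepR]; exact hvaR.2) hva
    have c2 := star_internal hstarR (by rw [← hrepR]; exact hvaR.2)
        (by rw [← hrepR]; exact hacR.2) haadj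
    rcases c2 with hc | hc
    · -- a = cR
      have hcMR : cT ∈ MR := leaf_of_ne hrepR hacR.2 (fun h => haS ((h.trans hc.symm) ▸ hcS))
      have hvMR : v ∈ MR := leaf_of_ne hrepR hvaR.1 (fun h => haS ((h.trans hc.symm) ▸ hvS))
      exact hstarR.2.2 cT hcMR v hvMR hadcv
    · -- cT = cR
      rcases c1 with hc' | hc'
      · exact hvcT (hc'.trans hc.symm)
      · exact hacT (hc'.trans hc.symm)
  · -- branch 2
    have hvane : v ≠ a := fun hc => haS (hc ▸ hvS)
    have hR3 : cT ∈ R ∧ v ∈ R ∧ a ∈ R := by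
      obtain ⟨M, hM, hcM, hvM, haM⟩ := cherry_mem_maxStar hadcv haadj.symm hvane hva
      rcases hS.mem_closed hM hvM hvS with rfl | rfl | rfl
      · exact absurd haM haS
      · exact absurd haM haT
      · exact ⟨hcM, hvM, haM⟩
    have c1 := star_internal hstarR (by rw [← hrepR]; exact hR3.1)
        (by rw [← hrepR]; exact hR3.2.1) hadcv
    have c2 := star_internal hstarR (by rw [← hrepR]; exact hR3.1)
        (by rw [← hrepR]; exact hR3.2.2) (haadj.symm)
    have hcc : cT = cR := by
      rcases c1 with hc | hc
      · exact hc
      · rcases c2 with hc' | hc'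
        · exact hc'
        · exact absurd (hc.trans hc'.symm) hvane
    have hvMR : v ∈ MR := leaf_of_ne hrepR hR3.2.1 (fun h => hvcT (h.trans hcc.symm))
    have haMR : a ∈ MR := leaf_of_ne hrepR hR3.2.2 (fun h => hacT (h.trans hcc.symm))
    have hwR : w ∉ R := by
      intro hwR
      have hwMR : w ∈ MR := leaf_of_ne hrepR hwR
        (fun h => (disj w hwA) ((h.trans hcc.symm) ▸ hcS))
      exact hstarR.2.2 w hwMR a haMR hadwa
    -- now use Q
    obtain ⟨z, hzQ, hzTR⟩ := hQTR
    have hzS : z ∉ S := hQS z hzQ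
    have hzA : z ∉ A := hQA z hzQ
    have hzcT : z ≠ cT := fun h => hzS (h ▸ hcS)
    obtain ⟨cQ, MQ, hstarQ, hrepQ⟩ := hQ.1
    obtain ⟨q, hqQ, hzq⟩ := star_exists_adj hstarQ (by rw [← hrepQ]; exact hzQ)
    rw [← hrepQ] at hqQ
    have hqS : q ∉ S := hQS q hqQ
    have hqA : q ∉ A := hQA q hqQ
    have hqcT : q ≠ cT := fun h => hqS (h ▸ hcS)
    have dichot : q ∉ T → q ∉ R → False := by
      intro hqT hqR
      by_cases hcq : H.Adj cT q
      · obtain ⟨M, hM, hcM, hqM⟩ := edge_mem_maxStar hcq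
        rcases hS.mem_closed hM hcM hcS with rfl | rfl | rfl
        · exact hqS hqM
        · exact hqT hqM
        · exact hqR hqM
      · have hadcz : H.Adj cT z := by
          rcases hzTR with hzT | hzR
          · exact hstarT.2.1 z (leaf_of_ne hrepT hzT hzcT)
          · exact hcc ▸ hstarR.2.1 z (leaf_of_ne hrepR hzR (fun h => hzcT (h.trans hcc.symm)))
        obtain ⟨M, hM, hzM, hcM, hqM⟩ := cherry_mem_maxStar hadcz.symm hzq hqcT.symm hcq
        rcases hS.mem_closed hM hcM hcS with rfl | rfl | rfl
        · exact hzS hzM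
        · exact hqT hqM
        · exact hqR hqM
    by_cases hzT : z ∈ T
    · have hzMT : z ∈ MT := leaf_of_ne hrepT hzT hzcT
      have hqT : q ∉ T := by
        intro hqT
        exact hstarT.2.2 z hzMT q (leaf_of_ne hrepT hqT hqcT) hzq
      by_cases hqR : q ∈ R
      · -- kill via cherry (cT; w, q)
        have hqMR : q ∈ MR := leaf_of_ne hrepR hqR (fun h => hqcT (h.trans hcc.symm))
        have hwq : ¬ H.Adj w q := by
          intro hwq
          obtain ⟨M, hM, hwM, hqM⟩ := edge_mem_maxStar hwq
          rcases hA.mem_closed hM hwM hwA with rfl | rfl | rfl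
          · exact hqA hqM
          · exact hqT hqM
          · exact hwR hwM
        have hwqne : w ≠ q := fun h => hqA (h ▸ hwA)
        have hadcq : H.Adj cT q := hcc ▸ hstarR.2.1 q hqMR
        obtain ⟨M, hM, hcM, hwM, hqM⟩ := cherry_mem_maxStar hadcw hadcq hwqne hwq
        rcases hS.mem_closed hM hcM hcS with rfl | rfl | rfl
        · exact disj w hwA hwM
        · exact hqT hqM
        · exact hwR hwM
      · exact dichot hqT hqR
    · have hzR : z ∈ R := hzTR.resolve_left hzT
      have hzMR : z ∈ MR := leaf_of_ne hrepR hzR (fun h => hzcT (h.trans hcc.symm))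
      have hqR : q ∉ R := by
        intro hqR
        exact hstarR.2.2 z hzMR q (leaf_of_ne hrepR hqR (fun h => hqcT (h.trans hcc.symm))) hzq
      by_cases hqT : q ∈ T
      · -- kill via cherry (cT; a, q)
        have hqMT : q ∈ MT := leaf_of_ne hrepT hqT hqcT
        have haq : ¬ H.Adj a q := by
          intro haq
          obtain ⟨M, hM, haM, hqM⟩ := edge_mem_maxStar haq
          rcases hA.mem_closed hM haM haA with rfl | rfl | rfl
          · exact hqA hqM
          · exact haT haM
          · exact hqR hqM
        have haqne : a ≠ q := fun h => hqA (h ▸ haA)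
        obtain ⟨M, hM, hcM, haM, hqM⟩ :=
          cherry_mem_maxStar haadj.symm (hstarT.2.1 q hqMT) haqne haq
        rcases hS.mem_closed hM hcM hcS with rfl | rfl | rfl
        · exact haS haM
        · exact haT haM
        · exact hqR hqM
      · exact dichot hqT hqR

/-- Case 1 of the twin lemma: both centers in `T`. -/
lemma d_core1 (hS : Deg2Cfg H S T R) (hA : Deg2Cfg H A T R)
    (disj : ∀ z ∈ A, z ∉ S)
    {v w : V} {L LA : Set V}
    (hstarS : IsStar H v L) (hrepS : S = insert v L)
    (hstarA : IsStar H w LA) (hrepA : A = insert w LA)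
    (hvT : v ∈ T) (hwT : w ∈ T)
    (hQ : Q ∈ maxStars H) (hQS : ∀ z ∈ Q, z ∉ S) (hQA : ∀ z ∈ Q, z ∉ A)
    (hQTR : ∃ z ∈ Q, z ∈ T ∨ z ∈ R) : False := by
  have disj' : ∀ z ∈ S, z ∉ A := fun z hz hza => disj z hza hz
  obtain ⟨cT, MT, hstarT, hrepT⟩ := hS.hT.1
  obtain ⟨cR, MR, hstarR, hrepR⟩ := hS.hR.1
  by_cases hc1 : cT = v
  · rw [hc1] at hstarT hrepT
    exact d_core1a hS hA disj hstarS hrepS hstarA hrepA hstarT hrepT hstarR hrepR hwT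
  by_cases hc2 : cT = w
  · rw [hc2] at hstarT hrepT
    exact d_core1a hA hS disj' hstarA hrepA hstarS hrepS hstarT hrepT hstarR hrepR hvT
  have hvMT : v ∈ MT := leaf_of_ne hrepT hvT (fun h => hc1 h.symm)
  have hwMT : w ∈ MT := leaf_of_ne hrepT hwT (fun h => hc2 h.symm)
  by_cases hc3 : cT ∈ S
  · exact d_core1bi hS hA disj hstarS hrepS hstarA hrepA hstarT hrepT hstarR hrepR
      hvMT hwMT (leaf_of_ne hrepS hc3 hc1) hQ hQS hQA hQTR
  by_cases hc4 : cT ∈ A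
  · exact d_core1bi hA hS disj' hstarA hrepA hstarS hrepS hstarT hrepT hstarR hrepR
      hwMT hvMT (leaf_of_ne hrepA hc4 hc2) hQ hQA hQS hQTR
  · exact d_core1biii hS hA disj hstarS hrepS hstarA hrepA hstarT hrepT hstarR hrepR
      hvMT hwMT hc3 hc4

end Layer5

section Layer6
variable {V : Type*} [Fintype V] {H : SimpleGraph V} {S A T R Q : Set V}

/-- Case 2a of the twin lemma: crossed centers, center of `T` outside `S ∪ A`. -/
lemma d_core2a (hS : Deg2Cfg H S T R) (hA : Deg2Cfg H A T R)
    (disj : ∀ z ∈ A, z ∉ S)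
    {v w cT cR : V} {L LA MT MR : Set V}
    (hstarS : IsStar H v L) (hrepS : S = insert v L)
    (hstarA : IsStar H w LA) (hrepA : A = insert w LA)
    (hstarT : IsStar H cT MT) (hrepT : T = insert cT MT)
    (hstarR : IsStar H cR MR) (hrepR : R = insert cR MR)
    (hvMT : v ∈ MT) (hwMR : w ∈ MR) (hvR : v ∉ R) (hwT : w ∉ T)
    (hcTS : cT ∉ S) (hcTA : cT ∉ A) : False := by
  have hvS : v ∈ S := by rw [hrepS]; exact Set.mem_insert _ _
  have hwA : w ∈ A := by rw [hrepA]; exact Set.mem_insert _ _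
  have hcRT : cR ∈ T := by
    rcases hS.third_center_mem hstarS hrepS hstarR hrepR with h1 | h1
    · rcases hA.third_center_mem hstarA hrepA hstarR hrepR with h2 | h2
      · exact absurd h1 (disj cR h2)
      · exact h2
    · exact h1
  have hadcv : H.Adj cT v := hstarT.2.1 v hvMT
  obtain ⟨x, hxL, hxc⟩ := center_blocked hS.hS hstarS hrepS hadcv.symm hcTS
  have hxS : x ∈ S := by rw [hrepS]; exact Set.mem_insert_of_mem _ hxL
  have hadvx : H.Adj v x := hstarS.2.1 x hxL
  have hxcT : x ≠ cT := fun h => hcTS (h ▸ hxS)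
  have hxT : x ∉ T := fun hxT =>
    hstarT.2.2 v hvMT x (leaf_of_ne hrepT hxT hxcT) hadvx
  have hxcR : x ∈ R ∧ cT ∈ R := by
    obtain ⟨M, hM, hxM, hcM⟩ := edge_mem_maxStar hxc
    rcases hS.mem_closed hM hxM hxS with rfl | rfl | rfl
    · exact absurd hcM hcTS
    · exact absurd hxM hxT
    · exact ⟨hxM, hcM⟩
  have hcc : cT = cR := by
    rcases star_internal hstarR (by rw [← hrepR]; exact hxcR.1)
        (by rw [← hrepR]; exact hxcR.2) hxc with hc | hc
    · exact absurd (hc ▸ hcRT) hxT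
    · exact hc
  have hadcw : H.Adj cT w := hcc ▸ hstarR.2.1 w hwMR
  obtain ⟨a, haLA, hac⟩ := center_blocked hA.hS hstarA hrepA hadcw.symm hcTA
  have haA : a ∈ A := by rw [hrepA]; exact Set.mem_insert_of_mem _ haLA
  have hadwa : H.Adj w a := hstarA.2.1 a haLA
  have hacT : a ≠ cT := fun h => hcTA (h ▸ haA)
  have haR : a ∉ R := by
    intro haR
    have haMR : a ∈ MR := leaf_of_ne hrepR haR (fun h => hacT (h.trans hcc.symm))
    exact hstarR.2.2 w hwMR a haMR hadwa
  have haT : a ∈ T := by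
    obtain ⟨M, hM, haM, hcM⟩ := edge_mem_maxStar hac
    rcases hA.mem_closed hM haM haA with rfl | rfl | rfl
    · exact absurd hcM hcTA
    · exact haM
    · exact absurd haM haR
  have hxMR : x ∈ MR := leaf_of_ne hrepR hxcR.1 (fun h => hxcT (h.trans hcc.symm))
  have hax : ¬ H.Adj a x := by
    intro hax
    obtain ⟨M, hM, haM, hxM⟩ := edge_mem_maxStar hax
    rcases hS.mem_closed hM hxM hxS with rfl | rfl | rfl
    · exact disj a haA haM
    · exact hxT hxM
    · exact haR haM
  have haxne : a ≠ x := fun h => disj a haA (h ▸ hxS)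
  obtain ⟨M, hM, hcM, haM, hxM⟩ :=
    cherry_mem_maxStar hac.symm (hcc ▸ hstarR.2.1 x hxMR) haxne hax
  rcases hS.mem_closed hM hxM hxS with rfl | rfl | rfl
  · exact disj a haA haM
  · exact hxT hxM
  · exact haR haM

/-- Corner C : crossed centers, `T` and `R` share their center `c ∈ L`. -/
lemma d_cornerC (hS : Deg2Cfg H S T R) (hA : Deg2Cfg H A T R)
    (disj : ∀ z ∈ A, z ∉ S)
    {v w cT cR : V} {L LA MT MR : Set V}
    (hstarS : IsStar H v L) (hrepS : S = insert v L)
    (hstarA : IsStar H w LA) (hrepA : A = insert w LA)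
    (hstarT : IsStar H cT MT) (hrepT : T = insert cT MT)
    (hstarR : IsStar H cR MR) (hrepR : R = insert cR MR)
    (hcc : cT = cR) (hcL : cT ∈ L)
    (hvMT : v ∈ MT) (hwMR : w ∈ MR) (hvR : v ∉ R) (hwT : w ∉ T)
    (hQ : Q ∈ maxStars H) (hQS : ∀ z ∈ Q, z ∉ S) (hQA : ∀ z ∈ Q, z ∉ A)
    (hQTR : ∃ z ∈ Q, z ∈ T ∨ z ∈ R) : False := by
  have hvS : v ∈ S := by rw [hrepS]; exact Set.mem_insert _ _
  have hwA : w ∈ A := by rw [hrepA]; exact Set.mem_insert _ _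
  have hcS : cT ∈ S := by rw [hrepS]; exact Set.mem_insert_of_mem _ hcL
  obtain ⟨z, hzQ, hzTR⟩ := hQTR
  have hzS : z ∉ S := hQS z hzQ
  have hzA : z ∉ A := hQA z hzQ
  have hzcT : z ≠ cT := fun h => hzS (h ▸ hcS)
  obtain ⟨cQ, MQ, hstarQ, hrepQ⟩ := hQ.1
  obtain ⟨q, hqQ, hzq⟩ := star_exists_adj hstarQ (by rw [← hrepQ]; exact hzQ)
  rw [← hrepQ] at hqQ
  have hqS : q ∉ S := hQS q hqQ
  have hqA : q ∉ A := hQA q hqQ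
  have hqcT : q ≠ cT := fun h => hqS (h ▸ hcS)
  have hadcz : H.Adj cT z := by
    rcases hzTR with hzT | hzR
    · exact hstarT.2.1 z (leaf_of_ne hrepT hzT hzcT)
    · exact hcc ▸ hstarR.2.1 z (leaf_of_ne hrepR hzR (fun h => hzcT (h.trans hcc.symm)))
  have dichot : q ∉ T → q ∉ R → False := by
    intro hqT hqR
    by_cases hcq : H.Adj cT q
    · obtain ⟨M, hM, hcM, hqM⟩ := edge_mem_maxStar hcq
      rcases hS.mem_closed hM hcM hcS with rfl | rfl | rfl
      · exact hqS hqM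
      · exact hqT hqM
      · exact hqR hqM
    · obtain ⟨M, hM, hzM, hcM, hqM⟩ := cherry_mem_maxStar hadcz.symm hzq hqcT.symm hcq
      rcases hS.mem_closed hM hcM hcS with rfl | rfl | rfl
      · exact hzS hzM
      · exact hqT hqM
      · exact hqR hqM
  by_cases hzT : z ∈ T
  · have hzMT : z ∈ MT := leaf_of_ne hrepT hzT hzcT
    have hqT : q ∉ T := fun hqT =>
      hstarT.2.2 z hzMT q (leaf_of_ne hrepT hqT hqcT) hzq
    by_cases hqR : q ∈ R
    · have hqMR : q ∈ MR := leaf_of_ne hrepR hqR (fun h => hqcT (h.trans hcc.symm))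
      have hvq : ¬ H.Adj v q := by
        intro hvq
        obtain ⟨M, hM, hvM, hqM⟩ := edge_mem_maxStar hvq
        rcases hS.mem_closed hM hvM hvS with rfl | rfl | rfl
        · exact hqS hqM
        · exact hqT hqM
        · exact hvR hvM
      have hvqne : v ≠ q := fun h => hqS (h ▸ hvS)
      obtain ⟨M, hM, hcM, hvM, hqM⟩ :=
        cherry_mem_maxStar (hstarT.2.1 v hvMT) (hcc ▸ hstarR.2.1 q hqMR) hvqne hvq
      rcases hS.mem_closed hM hvM hvS with rfl | rfl | rfl
      · exact hqS hqM
      · exact hqT hqM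
      · exact hvR hvM
    · exact dichot hqT hqR
  · have hzR : z ∈ R := hzTR.resolve_left hzT
    have hzMR : z ∈ MR := leaf_of_ne hrepR hzR (fun h => hzcT (h.trans hcc.symm))
    have hqR : q ∉ R := fun hqR =>
      hstarR.2.2 z hzMR q (leaf_of_ne hrepR hqR (fun h => hqcT (h.trans hcc.symm))) hzq
    by_cases hqT : q ∈ T
    · have hqMT : q ∈ MT := leaf_of_ne hrepT hqT hqcT
      have hwq : ¬ H.Adj w q := by
        intro hwq
        obtain ⟨M, hM, hwM, hqM⟩ := edge_mem_maxStar hwq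
        rcases hA.mem_closed hM hwM hwA with rfl | rfl | rfl
        · exact hqA hqM
        · exact hwT hwM
        · exact hqR hqM
      have hwqne : w ≠ q := fun h => hqA (h ▸ hwA)
      obtain ⟨M, hM, hcM, hwM, hqM⟩ :=
        cherry_mem_maxStar (hcc ▸ hstarR.2.1 w hwMR) (hstarT.2.1 q hqMT) hwqne hwq
      rcases hA.mem_closed hM hwM hwA with rfl | rfl | rfl
      · exact disj cT hcM hcS
      · exact hwT hwM
      · exact hqR hqM
    · exact dichot hqT hqR

/-- Corner D : crossed centers, center of `T` a leaf of `S`, center of `R` a leaf of `A`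
(and a leaf of `T`). -/
lemma d_cornerD (hS : Deg2Cfg H S T R) (hA : Deg2Cfg H A T R)
    (disj : ∀ z ∈ A, z ∉ S)
    {v w cT cR : V} {L LA MT MR : Set V}
    (hstarS : IsStar H v L) (hrepS : S = insert v L)
    (hstarA : IsStar H w LA) (hrepA : A = insert w LA)
    (hstarT : IsStar H cT MT) (hrepT : T = insert cT MT)
    (hstarR : IsStar H cR MR) (hrepR : R = insert cR MR)
    (hcL : cT ∈ L) (hcRA : cR ∈ A) (hcRMT : cR ∈ MT)
    (hQ : Q ∈ maxStars H) (hQS : ∀ z ∈ Q, z ∉ S) (hQA : ∀ z ∈ Q, z ∉ A)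
    (hQTR : ∃ z ∈ Q, z ∈ T ∨ z ∈ R) : False := by
  have hcS : cT ∈ S := by rw [hrepS]; exact Set.mem_insert_of_mem _ hcL
  obtain ⟨z, hzQ, hzTR⟩ := hQTR
  have hzS : z ∉ S := hQS z hzQ
  have hzA : z ∉ A := hQA z hzQ
  have hzcT : z ≠ cT := fun h => hzS (h ▸ hcS)
  have hzcR : z ≠ cR := fun h => hzA (h ▸ hcRA)
  obtain ⟨cQ, MQ, hstarQ, hrepQ⟩ := hQ.1
  obtain ⟨q, hqQ, hzq⟩ := star_exists_adj hstarQ (by rw [← hrepQ]; exact hzQ)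
  rw [← hrepQ] at hqQ
  have hqS : q ∉ S := hQS q hqQ
  have hqA : q ∉ A := hQA q hqQ
  have hqcT : q ≠ cT := fun h => hqS (h ▸ hcS)
  have hqcR : q ≠ cR := fun h => hqA (h ▸ hcRA)
  by_cases hzT : z ∈ T
  · have hzMT : z ∈ MT := leaf_of_ne hrepT hzT hzcT
    have hadcz : H.Adj cT z := hstarT.2.1 z hzMT
    have hqT : q ∉ T := fun hqT =>
      hstarT.2.2 z hzMT q (leaf_of_ne hrepT hqT hqcT) hzq
    by_cases hqR : q ∈ R
    · -- kill via cherry (q ; cR, z)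
      have hqMR : q ∈ MR := leaf_of_ne hrepR hqR hqcR
      have hcRz : ¬ H.Adj cR z := hstarT.2.2 cR hcRMT z hzMT
      have hcRzne : cR ≠ z := fun h => hzA (h ▸ hcRA)
      obtain ⟨M, hM, hqM, hcM, hzM⟩ :=
        cherry_mem_maxStar (hstarR.2.1 q hqMR).symm hzq.symm hcRzne hcRz
      rcases hA.mem_closed hM hcM hcRA with rfl | rfl | rfl
      · exact hzA hzM
      · exact hqT hqM
      · exact hstarR.2.2 z (leaf_of_ne hrepR hzM hzcR) q hqMR hzq
    · -- dichotomy at cT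
      by_cases hcq : H.Adj cT q
      · obtain ⟨M, hM, hcM, hqM⟩ := edge_mem_maxStar hcq
        rcases hS.mem_closed hM hcM hcS with rfl | rfl | rfl
        · exact hqS hqM
        · exact hqT hqM
        · exact hqR hqM
      · obtain ⟨M, hM, hzM, hcM, hqM⟩ := cherry_mem_maxStar hadcz.symm hzq hqcT.symm hcq
        rcases hS.mem_closed hM hcM hcS with rfl | rfl | rfl
        · exact hzS hzM
        · exact hqT hqM
        · exact hqR hqM
  · have hzR : z ∈ R := hzTR.resolve_left hzT
    have hzMR : z ∈ MR := leaf_of_ne hrepR hzR hzcR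
    have hadcz : H.Adj cR z := hstarR.2.1 z hzMR
    have hqR : q ∉ R := fun hqR =>
      hstarR.2.2 z hzMR q (leaf_of_ne hrepR hqR hqcR) hzq
    by_cases hqT : q ∈ T
    · -- kill via cherry (z ; cR, q)
      have hqMT : q ∈ MT := leaf_of_ne hrepT hqT hqcT
      have hcRq : ¬ H.Adj cR q := hstarT.2.2 cR hcRMT q hqMT
      have hcRqne : cR ≠ q := fun h => hqA (h.symm ▸ hcRA)
      obtain ⟨M, hM, hzM, hcM, hqM⟩ := cherry_mem_maxStar hadcz.symm hzq hcRqne hcRq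
      rcases hA.mem_closed hM hcM hcRA with rfl | rfl | rfl
      · exact hzA hzM
      · exact hzT hzM
      · exact hqR hqM
    · -- dichotomy at cR (via cfg A)
      by_cases hcq : H.Adj cR q
      · obtain ⟨M, hM, hcM, hqM⟩ := edge_mem_maxStar hcq
        rcases hA.mem_closed hM hcM hcRA with rfl | rfl | rfl
        · exact hqA hqM
        · exact hqT hqM
        · exact hqR hqM
      · obtain ⟨M, hM, hzM, hcM, hqM⟩ :=
          cherry_mem_maxStar hadcz.symm hzq (fun h => hqA (h.symm ▸ hcRA)) hcq
        rcases hA.mem_closed hM hcM hcRA with rfl | rfl | rfl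
        · exact hzA hzM
        · exact hzT hzM
        · exact hqR hqM

end Layer6

section Layer7
variable {V : Type*} [Fintype V] {H : SimpleGraph V} {S A T R Q : Set V}

/-- Case 2c' of the twin lemma: crossed centers, center of `T` a leaf of `A`. -/
lemma d_core2cp (hS : Deg2Cfg H S T R) (hA : Deg2Cfg H A T R)
    (disj : ∀ z ∈ A, z ∉ S)
    {v w cT cR : V} {L LA MT MR : Set V}
    (hstarS : IsStar H v L) (hrepS : S = insert v L)
    (hstarA : IsStar H w LA) (hrepA : A = insert w LA)
    (hstarT : IsStar H cT MT) (hrepT : T = insert cT MT)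
    (hstarR : IsStar H cR MR) (hrepR : R = insert cR MR)
    (hcTA : cT ∈ A)
    (hvMT : v ∈ MT) (hwMR : w ∈ MR) (hvR : v ∉ R) (hwT : w ∉ T)
    (hQ : Q ∈ maxStars H) (hQS : ∀ z ∈ Q, z ∉ S) (hQA : ∀ z ∈ Q, z ∉ A)
    (hQTR : ∃ z ∈ Q, z ∈ T ∨ z ∈ R) : False := by
  have hvS : v ∈ S := by rw [hrepS]; exact Set.mem_insert _ _
  have hwA : w ∈ A := by rw [hrepA]; exact Set.mem_insert _ _
  have hcTS : cT ∉ S := disj cT hcTA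
  have hadcv : H.Adj cT v := hstarT.2.1 v hvMT
  obtain ⟨x, hxL, hxc⟩ := center_blocked hS.hS hstarS hrepS hadcv.symm hcTS
  have hxS : x ∈ S := by rw [hrepS]; exact Set.mem_insert_of_mem _ hxL
  have hadvx : H.Adj v x := hstarS.2.1 x hxL
  have hxcT : x ≠ cT := fun h => hcTS (h ▸ hxS)
  have hxT : x ∉ T := fun hxT =>
    hstarT.2.2 v hvMT x (leaf_of_ne hrepT hxT hxcT) hadvx
  have hxcR : x ∈ R ∧ cT ∈ R := by
    obtain ⟨M, hM, hxM, hcM⟩ := edge_mem_maxStar hxc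
    rcases hS.mem_closed hM hxM hxS with rfl | rfl | rfl
    · exact absurd hcM hcTS
    · exact absurd hxM hxT
    · exact ⟨hxM, hcM⟩
  rcases star_internal hstarR (by rw [← hrepR]; exact hxcR.1)
      (by rw [← hrepR]; exact hxcR.2) hxc with hc | hc
  · -- cR = x : R is centered at the leaf x of S
    have hadxw : H.Adj x w := hc ▸ hstarR.2.1 w hwMR
    have hxA : x ∉ A := fun h => disj x h hxS
    obtain ⟨a, haLA, hax⟩ := center_blocked hA.hS hstarA hrepA hadxw.symm hxA
    have haA : a ∈ A := by rw [hrepA]; exact Set.mem_insert_of_mem _ haLA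
    have hadwa : H.Adj w a := hstarA.2.1 a haLA
    obtain ⟨M, hM, haM, hxM⟩ := edge_mem_maxStar hax
    rcases hS.mem_closed hM hxM hxS with rfl | rfl | rfl
    · exact disj a haA haM
    · exact hxT hxM
    · have haMR : a ∈ MR := leaf_of_ne hrepR haM (fun h => (disj a haA) ((h.trans hc.symm) ▸ hxS))
      exact hstarR.2.2 w hwMR a haMR hadwa
  · -- cT = cR : common center, a leaf of A ; swap roles and use corner C
    have hcTT : cT ∈ T := by rw [hrepT]; exact Set.mem_insert _ _
    exact d_cornerC hA.symm hS.symm (fun z hz hza => disj z hza hz) hstarA hrepA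
      hstarS hrepS hstarR hrepR hstarT hrepT hc.symm
      (leaf_of_ne hrepA (hc ▸ hcTA) (fun h => hwT ((hc.trans h) ▸ hcTT)))
      hwMR hvMT hwT hvR hQ hQA hQS
      (by obtain ⟨z, hz1, hz2⟩ := hQTR; exact ⟨z, hz1, hz2.symm⟩)

/-- Case 2 of the twin lemma : crossed centers. -/
lemma d_core2 (hS : Deg2Cfg H S T R) (hA : Deg2Cfg H A T R)
    (disj : ∀ z ∈ A, z ∉ S)
    {v w : V} {L LA : Set V}
    (hstarS : IsStar H v L) (hrepS : S = insert v L)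
    (hstarA : IsStar H w LA) (hrepA : A = insert w LA)
    (hvT : v ∈ T) (hvR : v ∉ R) (hwR : w ∈ R) (hwT : w ∉ T)
    (hQ : Q ∈ maxStars H) (hQS : ∀ z ∈ Q, z ∉ S) (hQA : ∀ z ∈ Q, z ∉ A)
    (hQTR : ∃ z ∈ Q, z ∈ T ∨ z ∈ R) : False := by
  have disj' : ∀ z ∈ S, z ∉ A := fun z hz hza => disj z hza hz
  have hvS : v ∈ S := by rw [hrepS]; exact Set.mem_insert _ _
  have hwA : w ∈ A := by rw [hrepA]; exact Set.mem_insert _ _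
  obtain ⟨cT, MT, hstarT, hrepT⟩ := hS.hT.1
  obtain ⟨cR, MR, hstarR, hrepR⟩ := hS.hR.1
  have hcTR : cT ∈ R := by
    rcases hS.symm.third_center_mem hstarS hrepS hstarT hrepT with h1 | h1
    · rcases hA.symm.third_center_mem hstarA hrepA hstarT hrepT with h2 | h2
      · exact absurd h1 (disj cT h2)
      · exact h2
    · exact h1
  have hcRT : cR ∈ T := by
    rcases hS.third_center_mem hstarS hrepS hstarR hrepR with h1 | h1
    · rcases hA.third_center_mem hstarA hrepA hstarR hrepR with h2 | h2
      · exact absurd h1 (disj cR h2)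
      · exact h2
    · exact h1
  have hvcT : v ≠ cT := fun h => hvR (h ▸ hcTR)
  have hwcR : w ≠ cR := fun h => hwT (h ▸ hcRT)
  have hvMT : v ∈ MT := leaf_of_ne hrepT hvT hvcT
  have hwMR : w ∈ MR := leaf_of_ne hrepR hwR hwcR
  by_cases hcTS : cT ∈ S
  · have hcTL : cT ∈ L := leaf_of_ne hrepS hcTS (fun h => hvR (h ▸ hcTR))
    by_cases hcReq : cR = cT
    · exact d_cornerC hS hA disj hstarS hrepS hstarA hrepA hstarT hrepT hstarR hrepR
        hcReq.symm hcTL hvMT hwMR hvR hwT hQ hQS hQA hQTR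
    have hcRMT : cR ∈ MT := leaf_of_ne hrepT hcRT hcReq
    by_cases hcRS : cR ∈ S
    · have hcRR : cR ∈ R := by rw [hrepR]; exact Set.mem_insert _ _
      have hcRL : cR ∈ L := leaf_of_ne hrepS hcRS (fun h => hvR (h ▸ hcRR))
      exact hstarS.2.2 cT hcTL cR hcRL (hstarT.2.1 cR hcRMT)
    by_cases hcRA : cR ∈ A
    · exact d_cornerD hS hA disj hstarS hrepS hstarA hrepA hstarT hrepT hstarR hrepR
        hcTL hcRA hcRMT hQ hQS hQA hQTR
    · -- cR ∉ S ∪ A : apply case 2a with all roles swapped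
      exact d_core2a hA.symm hS.symm disj' hstarA hrepA hstarS hrepS hstarR hrepR
        hstarT hrepT hwMR hvMT hwT hvR hcRA hcRS
  by_cases hcTA : cT ∈ A
  · exact d_core2cp hS hA disj hstarS hrepS hstarA hrepA hstarT hrepT hstarR hrepR
      hcTA hvMT hwMR hvR hwT hQ hQS hQA hQTR
  · exact d_core2a hS hA disj hstarS hrepS hstarA hrepA hstarT hrepT hstarR hrepR
      hvMT hwMR hvR hwT hcTS hcTA

/-- The twin lemma : no two disjoint degree-two stars with the same two neighbours,
given a poking star `Q`. -/
lemma no_twin_deg2 (hS : Deg2Cfg H S T R) (hA : Deg2Cfg H A T R)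
    (disj : ∀ z ∈ A, z ∉ S)
    (hQ : Q ∈ maxStars H) (hQS : ∀ z ∈ Q, z ∉ S) (hQA : ∀ z ∈ Q, z ∉ A)
    (hQTR : ∃ z ∈ Q, z ∈ T ∨ z ∈ R) : False := by
  have disj' : ∀ z ∈ S, z ∉ A := fun z hz hza => disj z hza hz
  obtain ⟨v, L, hstarS, hrepS⟩ := hS.hS.1
  obtain ⟨w, LA, hstarA, hrepA⟩ := hA.hS.1
  have hQTR' : ∃ z ∈ Q, z ∈ R ∨ z ∈ T := by
    obtain ⟨z, hz1, hz2⟩ := hQTR; exact ⟨z, hz1, hz2.symm⟩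
  have hv := hS.center_mem hstarS hrepS
  have hw := hA.center_mem hstarA hrepA
  by_cases hvT : v ∈ T
  · by_cases hwT : w ∈ T
    · exact d_core1 hS hA disj hstarS hrepS hstarA hrepA hvT hwT hQ hQS hQA hQTR
    · have hwR : w ∈ R := hw.resolve_left hwT
      by_cases hvR : v ∈ R
      · exact d_core1 hS.symm hA.symm disj hstarS hrepS hstarA hrepA hvR hwR hQ hQS hQA hQTR'
      · exact d_core2 hS hA disj hstarS hrepS hstarA hrepA hvT hvR hwR hwT hQ hQS hQA hQTR
  · have hvR : v ∈ R := hv.resolve_left hvT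
    by_cases hwR : w ∈ R
    · exact d_core1 hS.symm hA.symm disj hstarS hrepS hstarA hrepA hvR hwR hQ hQS hQA hQTR'
    · have hwT : w ∈ T := hw.resolve_right hwR
      exact d_core2 hA hS disj' hstarA hrepA hstarS hrepS hwT hwR hvR hvT hQ hQA hQS hQTR

end Layer7

section GLevel
variable {V : Type*} [Fintype V] {H : SimpleGraph V}

lemma starGraph_adj {u t : ↥(maxStars H)} :
    (_root_.starGraph H).Adj u t ↔ u ≠ t ∧ ((u : Set V) ∩ (t : Set V)).Nonempty := by
  unfold _root_.starGraph
  rw [SimpleGraph.fromRel_adj]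
  constructor
  · rintro ⟨h1, h2 | h2⟩
    · exact ⟨h1, h2⟩
    · exact ⟨h1, by rwa [Set.inter_comm]⟩
  · rintro ⟨h1, h2⟩
    exact ⟨h1, Or.inl h2⟩

/-- From a degree-two vertex of the star graph, extract a `Deg2Cfg`. -/
lemma mk_cfg {u t r : ↥(maxStars H)}
    (hN : (_root_.starGraph H).neighborSet u = {t, r}) (htr : t ≠ r) :
    Deg2Cfg H (u : Set V) (t : Set V) (r : Set V) := by
  have hadjt : (_root_.starGraph H).Adj u t := by
    have : t ∈ (_root_.starGraph H).neighborSet u := by rw [hN]; exact Set.mem_insert _ _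
    exact this
  have hadjr : (_root_.starGraph H).Adj u r := by
    have : r ∈ (_root_.starGraph H).neighborSet u := by
      rw [hN]; exact Set.mem_insert_of_mem _ rfl
    exact this
  obtain ⟨hut, hmt⟩ := _root_.starGraph_adj.mp hadjt
  obtain ⟨hur, hmr⟩ := _root_.starGraph_adj.mp hadjr
  refine ⟨u.2, t.2, r.2, ?_, ?_, ?_, ?_, ?_, ?_⟩
  · exact fun h => hut (Subtype.ext h.symm)
  · exact fun h => hur (Subtype.ext h.symm)
  · exact fun h => htr (Subtype.ext h)
  · rwa [Set.inter_comm]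
  · rwa [Set.inter_comm]
  · intro M hM hmeet
    by_cases hMu : (⟨M, hM⟩ : ↥(maxStars H)) = u
    · exact Or.inl (congrArg Subtype.val hMu)
    · have hadj : (_root_.starGraph H).Adj u ⟨M, hM⟩ :=
        _root_.starGraph_adj.mpr ⟨fun h => hMu h.symm, by rwa [Set.inter_comm]⟩
      have : (⟨M, hM⟩ : ↥(maxStars H)) ∈ (_root_.starGraph H).neighborSet u := hadj
      rw [hN] at this
      rcases this with h | h
      · exact Or.inr (Or.inl (congrArg Subtype.val h))
      · exact Or.inr (Or.inr (congrArg Subtype.val h))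

/-- First-exit: a connected graph with a vertex outside `C` has an edge leaving `C`. -/
lemma exists_poker {W : Type*} {G : SimpleGraph W} (hconn : G.Connected)
    {C : Set W} {u P : W} (hu : u ∈ C) (hP : P ∉ C) :
    ∃ q, q ∉ C ∧ ∃ c ∈ C, G.Adj c q := by
  obtain ⟨p⟩ := hconn.preconnected u P
  obtain ⟨d, _, hd1, hd2⟩ := p.exists_boundary_dart C hu hP
  exact ⟨d.snd, hd2, d.fst, hd1, d.adj⟩

/-- Build an isomorphism with the triangle. -/
lemma iso_top3 {W : Type*} (G : SimpleGraph W) (u t r : W)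
    (hut : u ≠ t) (hur : u ≠ r) (htr : t ≠ r)
    (huniv : ∀ x : W, x = u ∨ x = t ∨ x = r)
    (h1 : G.Adj u t) (h2 : G.Adj u r) (h3 : G.Adj t r) :
    Nonempty (G ≃g (⊤ : SimpleGraph (Fin 3))) := by
  classical
  have hadj : ∀ x y : W, x ≠ y → G.Adj x y := by
    intro x y hne
    rcases huniv x with rfl | rfl | rfl <;> rcases huniv y with rfl | rfl | rfl <;>
      first
        | exact absurd rfl hne
        | assumption
        | exact h1.symm
        | exact h2.symm
        | exact h3.symm
  let f : W → Fin 3 := fun x => if x = u then 0 else if x = t then 1 else 2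
  let g : Fin 3 → W := fun i => if i = 0 then u else if i = 1 then t else r
  have hgf : Function.LeftInverse g f := by
    intro x
    rcases huniv x with rfl | rfl | rfl
    · simp [f, g]
    · simp [f, g, hut.symm]
    · simp [f, g, hur.symm, htr.symm]
  have hfg : Function.RightInverse g f := by
    intro i
    fin_cases i
    · simp [f, g]
    · simp [f, g, hut.symm]
    · simp [f, g, hur.symm, htr.symm]
  let e : W ≃ Fin 3 := ⟨f, g, hgf, hfg⟩
  refine ⟨⟨e, ?_⟩⟩
  intro x y
  simp only [SimpleGraph.top_adj]
  constructor
  · intro h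
    exact hadj x y (fun hc => h (by rw [hc]))
  · intro h
    exact fun hc => h.ne (e.injective hc)

/-- Build an isomorphism with the diamond. -/
lemma iso_diamond4 {W : Type*} (G : SimpleGraph W) (u a t r : W)
    (hua : u ≠ a) (hut : u ≠ t) (hur : u ≠ r) (hat : a ≠ t) (har : a ≠ r) (htr : t ≠ r)
    (huniv : ∀ x : W, x = u ∨ x = a ∨ x = t ∨ x = r)
    (h1 : G.Adj u t) (h2 : G.Adj u r) (h3 : G.Adj a t) (h4 : G.Adj a r)
    (h5 : G.Adj t r) (h6 : ¬ G.Adj u a) :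
    Nonempty (G ≃g diamond) := by
  classical
  let f : W → Fin 4 := fun x => if x = u then 0 else if x = a then 1 else if x = t then 2 else 3
  let g : Fin 4 → W := fun i => if i = 0 then u else if i = 1 then a else if i = 2 then t else r
  have hgf : Function.LeftInverse g f := by
    intro x
    rcases huniv x with rfl | rfl | rfl | rfl
    · simp [f, g]
    · simp [f, g, hua.symm]
    · simp [f, g, hut.symm, hat.symm]
    · simp [f, g, hur.symm, har.symm, htr.symm]
  have hfg : Function.RightInverse g f := by
    intro i
    fin_cases i
    · simp [f, g]
    · simp [f, g, hua.symm]
    · simp [f, g, hut.symm, hat.symm]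
    · simp [f, g, hur.symm, har.symm, htr.symm]
  let e : W ≃ Fin 4 := ⟨f, g, hgf, hfg⟩
  have hD : ∀ i j : Fin 4, diamond.Adj i j ↔ (i ≠ j ∧ ¬(i = 0 ∧ j = 1) ∧ ¬(i = 1 ∧ j = 0)) := by
    intro i j
    simp only [diamond, SimpleGraph.deleteEdges_adj, SimpleGraph.top_adj,
      Set.mem_singleton_iff, Sym2.eq_iff]
    tauto
  have hfu : f u = 0 := by simp [f]
  have hfa : f a = 1 := by simp [f, hua.symm]
  have hft : f t = 2 := by simp [f, hut.symm, hat.symm]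
  have hfr : f r = 3 := by simp [f, hur.symm, har.symm, htr.symm]
  refine ⟨⟨e, ?_⟩⟩
  intro x y
  show diamond.Adj (f x) (f y) ↔ G.Adj x y
  rcases huniv x with rfl | rfl | rfl | rfl <;> rcases huniv y with rfl | rfl | rfl | rfl
  · rw [hfu, hD]; exact iff_of_false (by decide) G.irrefl
  · rw [hfu, hfa, hD]; exact iff_of_false (by decide) h6
  · rw [hfu, hft, hD]; exact iff_of_true (by decide) h1
  · rw [hfu, hfr, hD]; exact iff_of_true (by decide) h2
  · rw [hfa, hfu, hD]; exact iff_of_false (by decide) (fun h => h6 h.symm)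
  · rw [hfa, hD]; exact iff_of_false (by decide) G.irrefl
  · rw [hfa, hft, hD]; exact iff_of_true (by decide) h3
  · rw [hfa, hfr, hD]; exact iff_of_true (by decide) h4
  · rw [hft, hfu, hD]; exact iff_of_true (by decide) h1.symm
  · rw [hft, hfa, hD]; exact iff_of_true (by decide) h3.symm
  · rw [hft, hD]; exact iff_of_false (by decide) G.irrefl
  · rw [hft, hfr, hD]; exact iff_of_true (by decide) h5
  · rw [hfr, hfu, hD]; exact iff_of_true (by decide) h2.symm
  · rw [hfr, hfa, hD]; exact iff_of_true (by decide) h4.symm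
  · rw [hfr, hft, hD]; exact iff_of_true (by decide) h5.symm
  · rw [hfr, hD]; exact iff_of_false (by decide) G.irrefl

end GLevel

section GAssemble
variable {V : Type*} [Fintype V] {H : SimpleGraph V}

lemma G_F3 {u t r : ↥(maxStars H)}
    (hN : (_root_.starGraph H).neighborSet u = {t, r}) (htr : t ≠ r) :
    (_root_.starGraph H).Adj t r := by
  have cfg := mk_cfg hN htr
  exact _root_.starGraph_adj.mpr ⟨htr, cfg.nbrs_meet⟩

/-- No two adjacent degree-two vertices, one-sided version. -/
lemma G_no_adj_aux (hconn : (_root_.starGraph H).Connected)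
    (hnt : ¬ Nonempty (_root_.starGraph H ≃g (⊤ : SimpleGraph (Fin 3))))
    {u t r : ↥(maxStars H)}
    (hNu : (_root_.starGraph H).neighborSet u = {t, r}) (htr : t ≠ r)
    (hdegt : ((_root_.starGraph H).neighborSet t).ncard = 2) : False := by
  have cfg_u := mk_cfg hNu htr
  have hAdjut : (_root_.starGraph H).Adj u t := by
    have : t ∈ (_root_.starGraph H).neighborSet u := by rw [hNu]; exact Set.mem_insert _ _
    exact this
  have hAdjur : (_root_.starGraph H).Adj u r := by
    have : r ∈ (_root_.starGraph H).neighborSet u := by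
      rw [hNu]; exact Set.mem_insert_of_mem _ rfl
    exact this
  have hAdjtr : (_root_.starGraph H).Adj t r := G_F3 hNu htr
  have hur : u ≠ r := hAdjur.ne
  have hsub : ({u, r} : Set ↥(maxStars H)) ⊆ (_root_.starGraph H).neighborSet t := by
    rintro x (rfl | rfl)
    · exact hAdjut.symm
    · exact hAdjtr
  have hNt : (_root_.starGraph H).neighborSet t = {u, r} := by
    refine (Set.eq_of_subset_of_ncard_le hsub ?_ (Set.toFinite _)).symm
    rw [hdegt, Set.ncard_pair hur]
  have cfg_t := mk_cfg hNt hur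
  by_cases hall : ∀ x : ↥(maxStars H), x = u ∨ x = t ∨ x = r
  · exact hnt (iso_top3 (_root_.starGraph H) u t r hAdjut.ne hur htr hall hAdjut hAdjur hAdjtr)
  · push_neg at hall
    obtain ⟨P, hP1, hP2, hP3⟩ := hall
    have hPC : P ∉ ({u, t, r} : Set ↥(maxStars H)) := by
      simp only [Set.mem_insert_iff, Set.mem_singleton_iff]
      tauto
    obtain ⟨q, hqC, c, hcC, hAdjcq⟩ := exists_poker hconn (Set.mem_insert u {t, r}) hPC
    have hqu : q ≠ u := fun h => hqC (h ▸ Set.mem_insert _ _)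
    have hqt : q ≠ t := fun h => hqC (by rw [h]; right; exact Set.mem_insert _ _)
    have hqr : q ≠ r := fun h => hqC (by rw [h]; right; right; rfl)
    rcases hcC with rfl | rfl | rfl
    · have : q ∈ (_root_.starGraph H).neighborSet c := hAdjcq
      rw [hNu] at this
      rcases this with h | h
      · exact hqt h
      · exact hqr h
    · have : q ∈ (_root_.starGraph H).neighborSet c := hAdjcq
      rw [hNt] at this
      rcases this with h | h
      · exact hqu h
      · exact hqr h
    · have hQR : ((q : Set V) ∩ (c : Set V)).Nonempty := by
        have := (_root_.starGraph_adj.mp hAdjcq).2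
        rwa [Set.inter_comm] at this
      refine no_adjacent_deg2 cfg_u cfg_t q.2 ?_ ?_ ⟨hQR.choose, hQR.choose_spec.1, hQR.choose_spec.2⟩
      · intro z hz hzu
        have : (_root_.starGraph H).Adj u q := _root_.starGraph_adj.mpr ⟨hqu.symm, ⟨z, hzu, hz⟩⟩
        have : q ∈ (_root_.starGraph H).neighborSet u := this
        rw [hNu] at this
        rcases this with h | h
        · exact hqt h
        · exact hqr h
      · intro z hz hzt
        have : (_root_.starGraph H).Adj t q := _root_.starGraph_adj.mpr ⟨hqt.symm, ⟨z, hzt, hz⟩⟩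
        have : q ∈ (_root_.starGraph H).neighborSet t := this
        rw [hNt] at this
        rcases this with h | h
        · exact hqu h
        · exact hqr h

/-- No two adjacent degree-two vertices of the star graph. -/
lemma G_no_adj (hconn : (_root_.starGraph H).Connected)
    (hnt : ¬ Nonempty (_root_.starGraph H ≃g (⊤ : SimpleGraph (Fin 3))))
    {u w : ↥(maxStars H)}
    (hdegu : ((_root_.starGraph H).neighborSet u).ncard = 2)
    (hdegw : ((_root_.starGraph H).neighborSet w).ncard = 2)
    (hadj : (_root_.starGraph H).Adj u w) : False := by
  obtain ⟨a, b, hab, hNu⟩ := Set.ncard_eq_two.mp hdegu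
  have hw : w ∈ (_root_.starGraph H).neighborSet u := hadj
  rw [hNu] at hw
  rcases hw with rfl | rfl
  · exact G_no_adj_aux hconn hnt hNu hab hdegw
  · rw [Set.pair_comm] at hNu
    exact G_no_adj_aux hconn hnt hNu hab.symm hdegw

/-- One-sided exclusivity : if the center of `u` lies in its neighbour `t`, then `t`
is adjacent to no other degree-two vertex, and has degree at least three. -/
lemma G_F1_aux (hconn : (_root_.starGraph H).Connected)
    (hnd : ¬ Nonempty (_root_.starGraph H ≃g diamond))
    (hnt : ¬ Nonempty (_root_.starGraph H ≃g (⊤ : SimpleGraph (Fin 3))))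
    {u t r : ↥(maxStars H)}
    (hNu : (_root_.starGraph H).neighborSet u = {t, r}) (htr : t ≠ r)
    {v : V} {L : Set V} (hstarS : IsStar H v L) (hrepS : (u : Set V) = insert v L)
    (hvT : v ∈ (t : Set V)) :
    3 ≤ ((_root_.starGraph H).neighborSet t).ncard ∧
      ∀ w', w' ≠ u → ((_root_.starGraph H).neighborSet w').ncard = 2 →
        ¬ (_root_.starGraph H).Adj t w' := by
  have cfg_u := mk_cfg hNu htr
  have hAdjut : (_root_.starGraph H).Adj u t := by
    have : t ∈ (_root_.starGraph H).neighborSet u := by rw [hNu]; exact Set.mem_insert _ _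
    exact this
  have hAdjur : (_root_.starGraph H).Adj u r := by
    have : r ∈ (_root_.starGraph H).neighborSet u := by
      rw [hNu]; exact Set.mem_insert_of_mem _ rfl
    exact this
  have hAdjtr : (_root_.starGraph H).Adj t r := G_F3 hNu htr
  have hdegu : ((_root_.starGraph H).neighborSet u).ncard = 2 := by
    rw [hNu, Set.ncard_pair htr]
  constructor
  · by_contra hdegt
    push_neg at hdegt
    have hur : u ≠ r := hAdjur.ne
    have hsub : ({u, r} : Set ↥(maxStars H)) ⊆ (_root_.starGraph H).neighborSet t := by
      rintro x (rfl | rfl)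
      · exact hAdjut.symm
      · exact hAdjtr
    have hNt : (_root_.starGraph H).neighborSet t = {u, r} := by
      refine (Set.eq_of_subset_of_ncard_le hsub ?_ (Set.toFinite _)).symm
      · rw [Set.ncard_pair hur]; omega
    have hdegt2 : ((_root_.starGraph H).neighborSet t).ncard = 2 := by
      rw [hNt, Set.ncard_pair hur]
    exact G_no_adj hconn hnt hdegu hdegt2 hAdjut
  · intro w' hw'u hw'deg hAdjtw'
    by_cases hw'adj : (_root_.starGraph H).Adj u w'
    · have hw'N : w' ∈ (_root_.starGraph H).neighborSet u := hw'adj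
      rw [hNu] at hw'N
      rcases hw'N with rfl | rfl
      · exact (_root_.starGraph H).irrefl hAdjtw'
      · exact G_no_adj hconn hnt hdegu hw'deg hw'adj
    · have hQS : ∀ z ∈ (w' : Set V), z ∉ (u : Set V) := by
        intro z hz hzu
        exact hw'adj (_root_.starGraph_adj.mpr ⟨hw'u.symm, ⟨z, hzu, hz⟩⟩)
      have hAT : ((w' : Set V) ∩ (t : Set V)).Nonempty := by
        have := (_root_.starGraph_adj.mp hAdjtw').2
        rwa [Set.inter_comm] at this
      by_cases hmeet : ((w' : Set V) ∩ (r : Set V)).Nonempty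
      · -- twin configuration
        have hw'r : w' ≠ r := by
          rintro rfl
          exact hw'adj hAdjur
        have hAdjw'r : (_root_.starGraph H).Adj w' r := _root_.starGraph_adj.mpr ⟨hw'r, hmeet⟩
        have hsub : ({t, r} : Set ↥(maxStars H)) ⊆ (_root_.starGraph H).neighborSet w' := by
          rintro x (rfl | rfl)
          · exact hAdjtw'.symm
          · exact hAdjw'r
        have hNw' : (_root_.starGraph H).neighborSet w' = {t, r} := by
          refine (Set.eq_of_subset_of_ncard_le hsub ?_ (Set.toFinite _)).symm
          rw [hw'deg, Set.ncard_pair htr]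
        have cfg_w' := mk_cfg hNw' htr
        by_cases hall : ∀ x : ↥(maxStars H), x = u ∨ x = w' ∨ x = t ∨ x = r
        · refine hnd (iso_diamond4 (_root_.starGraph H) u w' t r hw'u.symm hAdjut.ne hAdjur.ne
            hAdjtw'.ne' (_root_.starGraph_adj.mp hAdjw'r).1 htr hall hAdjut hAdjur hAdjtw'.symm
            hAdjw'r hAdjtr ?_)
          exact fun h => hw'adj h
        · push_neg at hall
          obtain ⟨P, hP1, hP2, hP3, hP4⟩ := hall
          have hPC : P ∉ ({u, w', t, r} : Set ↥(maxStars H)) := by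
            simp only [Set.mem_insert_iff, Set.mem_singleton_iff]
            tauto
          obtain ⟨q, hqC, c, hcC, hAdjcq⟩ :=
            exists_poker hconn (Set.mem_insert u {w', t, r}) hPC
          have hqu : q ≠ u := fun h => hqC (h ▸ Set.mem_insert _ _)
          have hqw' : q ≠ w' := fun h => hqC (by rw [h]; right; exact Set.mem_insert _ _)
          have hqt : q ≠ t := fun h => hqC (by rw [h]; right; right; exact Set.mem_insert _ _)
          have hqr : q ≠ r := fun h => hqC (by rw [h]; right; right; right; rfl)
          have hqnbru : q ∉ ({t, r} : Set ↥(maxStars H)) := by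
            simp only [Set.mem_insert_iff, Set.mem_singleton_iff]
            tauto
          have hQu : ∀ z ∈ (q : Set V), z ∉ (u : Set V) := by
            intro z hz hzu
            have : q ∈ (_root_.starGraph H).neighborSet u :=
              _root_.starGraph_adj.mpr ⟨hqu.symm, ⟨z, hzu, hz⟩⟩
            rw [hNu] at this
            exact hqnbru this
          have hQw' : ∀ z ∈ (q : Set V), z ∉ (w' : Set V) := by
            intro z hz hzw
            have : q ∈ (_root_.starGraph H).neighborSet w' :=
              _root_.starGraph_adj.mpr ⟨hqw'.symm, ⟨z, hzw, hz⟩⟩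
            rw [hNw'] at this
            exact hqnbru this
          have hQTR : ∃ z ∈ (q : Set V), z ∈ (t : Set V) ∨ z ∈ (r : Set V) := by
            rcases hcC with rfl | rfl | rfl | rfl
            · exfalso
              have : q ∈ (_root_.starGraph H).neighborSet c := hAdjcq
              rw [hNu] at this; exact hqnbru this
            · exfalso
              have : q ∈ (_root_.starGraph H).neighborSet c := hAdjcq
              rw [hNw'] at this; exact hqnbru this
            · obtain ⟨z, hz1, hz2⟩ := (_root_.starGraph_adj.mp hAdjcq).2
              exact ⟨z, hz2, Or.inl hz1⟩
            · obtain ⟨z, hz1, hz2⟩ := (_root_.starGraph_adj.mp hAdjcq).2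
              exact ⟨z, hz2, Or.inr hz1⟩
          exact no_twin_deg2 cfg_u cfg_w' hQS q.2 hQu hQw' hQTR
      · -- cross-kill configuration
        refine cross_kill cfg_u hstarS hrepS hvT w'.2 hQS ?_ hAT
        intro z hz hzr
        exact hmeet ⟨z, hz, hzr⟩

end GAssemble

section Counting
open Finset

/-- The counting argument: a finite graph in which every degree-two vertex has
adjacent neighbours and an exclusive neighbour of degree at least three satisfies
both bounds. -/
lemma counting {W : Type*} [Fintype W] (G : SimpleGraph W)
    (hF3 : ∀ u t r : W, G.neighborSet u = {t, r} → t ≠ r → G.Adj t r)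
    (hF1 : ∀ u : W, (G.neighborSet u).ncard = 2 →
      ∃ x, G.Adj u x ∧ 3 ≤ (G.neighborSet x).ncard ∧
        ∀ w', w' ≠ u → (G.neighborSet w').ncard = 2 → ¬ G.Adj x w') :
    ({e ∈ G.edgeSet | ∃ u v : W, e = s(u, v) ∧
        ((G.neighborSet u).ncard = 2 ∨ (G.neighborSet v).ncard = 2)}.ncard
        ≤ Fintype.card W - 1) ∧
      7 * ({e ∈ G.edgeSet | ∃ u v : W, e = s(u, v) ∧
        ((G.neighborSet u).ncard = 2 ∨ (G.neighborSet v).ncard = 2)}.ncard)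
        ≤ 4 * G.edgeSet.ncard := by
  classical
  set dg : W → ℕ := fun u => (G.neighborSet u).ncard with hdg
  -- choice of the two neighbours, the first being exclusive of degree ≥ 3
  have hpair : ∀ u : W, dg u = 2 → ∃ x y : W, x ≠ y ∧ G.neighborSet u = {x, y} ∧
      3 ≤ dg x ∧ ∀ w', w' ≠ u → dg w' = 2 → ¬ G.Adj x w' := by
    intro u hu
    obtain ⟨a, b, hab, hN⟩ := Set.ncard_eq_two.mp hu
    obtain ⟨x, hxadj, h3, hexcl⟩ := hF1 u hu
    have hxN : x ∈ G.neighborSet u := hxadj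
    rw [hN] at hxN
    rcases hxN with rfl | rfl
    · exact ⟨x, b, hab, hN, h3, hexcl⟩
    · exact ⟨x, a, hab.symm, by rw [hN, Set.pair_comm], h3, hexcl⟩
  have hkey : ∀ u : W, ∃ x y : W, dg u = 2 → (x ≠ y ∧ G.neighborSet u = {x, y} ∧
      3 ≤ dg x ∧ ∀ w', w' ≠ u → dg w' = 2 → ¬ G.Adj x w') := by
    intro u
    by_cases h : dg u = 2
    · obtain ⟨x, y, h'⟩ := hpair u h
      exact ⟨x, y, fun _ => h'⟩
    · exact ⟨u, u, fun hc => absurd hc h⟩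
  choose fx fy hkey using hkey
  -- the extra neighbour of fx u
  have hcex : ∀ u : W, ∃ c : W, dg u = 2 → (G.Adj (fx u) c ∧ c ≠ u ∧ c ≠ fy u) := by
    intro u
    by_cases h : dg u = 2
    · obtain ⟨hne, hN, h3, hexcl⟩ := hkey u h
      have : ¬ (G.neighborSet (fx u) ⊆ {u, fy u}) := by
        intro hsub
        have hle := Set.ncard_le_ncard hsub (Set.toFinite _)
        have h2 : ({u, fy u} : Set W).ncard ≤ 2 := by
          refine le_trans (Set.ncard_insert_le _ _) ?_
          simp
        have h3' : 3 ≤ (G.neighborSet (fx u)).ncard := h3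
        omega
      rw [Set.not_subset] at this
      obtain ⟨c, hcN, hc2⟩ := this
      simp only [Set.mem_insert_iff, Set.mem_singleton_iff, not_or] at hc2
      exact ⟨c, fun _ => ⟨hcN, hc2.1, hc2.2⟩⟩
    · exact ⟨u, fun hc => absurd hc h⟩
  choose fc hfc using hcex
  -- independence of degree-two vertices
  have hindep : ∀ u w : W, dg u = 2 → dg w = 2 → ¬ G.Adj u w := by
    intro u w hu hw hadj
    obtain ⟨hne, hN, h3, hexcl⟩ := hkey u hu
    have hwN : w ∈ G.neighborSet u := hadj
    rw [hN] at hwN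
    rcases hwN with rfl | rfl
    · have h3' : dg (fx u) = 2 := hw
      omega
    · exact hexcl (fy u) hadj.ne' hw (hF3 u (fx u) (fy u) hN hne)
  -- basic facts
  have hfyN : ∀ u : W, dg u = 2 → G.Adj u (fy u) := by
    intro u hu
    have : fy u ∈ G.neighborSet u := by
      rw [(hkey u hu).2.1]; exact Set.mem_insert_of_mem _ rfl
    exact this
  have hfxN : ∀ u : W, dg u = 2 → G.Adj u (fx u) := by
    intro u hu
    have : fx u ∈ G.neighborSet u := by
      rw [(hkey u hu).2.1]; exact Set.mem_insert _ _
    exact this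
  have hfxd : ∀ u : W, dg u = 2 → dg (fx u) ≠ 2 := by
    intro u hu
    have := (hkey u hu).2.2.1
    omega
  have hfyd : ∀ u : W, dg u = 2 → dg (fy u) ≠ 2 := by
    intro u hu hc
    exact hindep u (fy u) hu hc (hfyN u hu)
  have hfxinj : ∀ u u' : W, dg u = 2 → dg u' = 2 → fx u = fx u' → u = u' := by
    intro u u' hu hu' he
    by_contra hne
    exact (hkey u' hu').2.2.2 u hne hu (he ▸ (hfxN u hu).symm)
  -- Finset setup
  haveI : Fintype G.edgeSet := Fintype.ofFinite _
  set Dfin : Finset W := Finset.univ.filter (fun u => dg u = 2) with hDfin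
  set E2fin : Finset (Sym2 W) := G.edgeFinset.filter
    (fun e => ∃ u v : W, e = s(u, v) ∧ (dg u = 2 ∨ dg v = 2)) with hE2fin
  set Bfin : Finset (Sym2 W) := Dfin.image (fun u => s(fx u, fy u)) with hBfin
  set Xfin : Finset (Sym2 W) := Dfin.image (fun u => s(fx u, fc u)) with hXfin
  set d : ℕ := Dfin.card with hd
  -- E2 is covered by two edges per degree-two vertex
  have hcover : E2fin ⊆ Dfin.biUnion (fun u => {s(u, fx u), s(u, fy u)}) := by
    intro e he
    simp only [hE2fin, Finset.mem_filter] at he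
    obtain ⟨heE, u, v, rfl, hdeg⟩ := he
    have hadj : G.Adj u v := by
      rw [SimpleGraph.mem_edgeFinset, SimpleGraph.mem_edgeSet] at heE
      exact heE
    rw [Finset.mem_biUnion]
    rcases hdeg with hu | hv
    · refine ⟨u, by simp [hDfin, hu], ?_⟩
      have : v ∈ G.neighborSet u := hadj
      rw [(hkey u hu).2.1] at this
      rcases this with rfl | rfl <;> simp
    · refine ⟨v, by simp [hDfin, hv], ?_⟩
      have : u ∈ G.neighborSet v := hadj.symm
      rw [(hkey v hv).2.1] at this
      rcases this with rfl | rfl <;>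
        · rw [Sym2.eq_swap]; simp
  have hE2card : E2fin.card ≤ 2 * d := by
    refine le_trans (Finset.card_le_card hcover) ?_
    refine le_trans (Finset.card_biUnion_le) ?_
    calc ∑ u ∈ Dfin, ({s(u, fx u), s(u, fy u)} : Finset (Sym2 W)).card
        ≤ ∑ _u ∈ Dfin, 2 := by
          refine Finset.sum_le_sum ?_
          intro i _
          exact Finset.card_insert_le _ _ |>.trans (by simp)
      _ = 2 * d := by rw [Finset.sum_const, hd, smul_eq_mul, mul_comm]
  -- first bound : 2d + 1 ≤ |W| when some degree-two vertex exists
  have hbound1 : E2fin.card ≤ Fintype.card W - 1 := by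
    rcases Finset.eq_empty_or_nonempty Dfin with hD0 | ⟨u0, hu0⟩
    · have : E2fin.card = 0 := by
        rw [Finset.card_eq_zero]
        refine Finset.eq_empty_of_forall_notMem ?_
        intro e he
        have := hcover he
        rw [hD0] at this
        simp at this
      omega
    · have hu0d : dg u0 = 2 := by
        rw [hDfin, Finset.mem_filter] at hu0
        exact hu0.2
      have hdisj1 : Disjoint Dfin (Dfin.image fx) := by
        rw [Finset.disjoint_right]
        intro x hx1 hx2
        rw [Finset.mem_image] at hx1
        obtain ⟨u', hu', rfl⟩ := hx1
        rw [hDfin, Finset.mem_filter] at hu' hx2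
        exact hfxd u' hu'.2 hx2.2
      have hyD : fy u0 ∉ Dfin ∪ Dfin.image fx := by
        rw [Finset.mem_union, Finset.mem_image]
        rintro (h | ⟨u', hu', he⟩)
        · rw [hDfin, Finset.mem_filter] at h
          exact hfyd u0 hu0d h.2
        · rw [hDfin, Finset.mem_filter] at hu'
          by_cases huu : u' = u0
          · exact (hkey u0 hu0d).1 (huu ▸ he)
          · exact (hkey u' hu'.2).2.2.2 u0 (fun hc => huu hc.symm) hu0d
              (he ▸ (hfyN u0 hu0d).symm)
      have hcard3 : (insert (fy u0) (Dfin ∪ Dfin.image fx)).card = 2 * d + 1 := by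
        rw [Finset.card_insert_of_notMem hyD, Finset.card_union_of_disjoint hdisj1,
          Finset.card_image_of_injOn]
        · omega
        · intro a ha b hb he
          simp only [hDfin, Finset.mem_coe, Finset.mem_filter, Finset.mem_univ,
            true_and] at ha hb
          exact hfxinj a b ha hb he
      have hle : (insert (fy u0) (Dfin ∪ Dfin.image fx)).card ≤ Fintype.card W :=
        Finset.card_le_card (Finset.subset_univ _) |>.trans (by rw [Finset.card_univ])
      omega
  -- second bound pieces
  have hEsub : E2fin ∪ Bfin ∪ Xfin ⊆ G.edgeFinset := by
    intro e he
    rw [Finset.mem_union, Finset.mem_union] at he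
    rcases he with (he | he) | he
    · simp only [hE2fin, Finset.mem_filter] at he
      exact he.1
    · rw [hBfin, Finset.mem_image] at he
      obtain ⟨u, hu, rfl⟩ := he
      rw [hDfin, Finset.mem_filter] at hu
      rw [SimpleGraph.mem_edgeFinset, SimpleGraph.mem_edgeSet]
      exact hF3 u (fx u) (fy u) (hkey u hu.2).2.1 (hkey u hu.2).1
    · rw [hXfin, Finset.mem_image] at he
      obtain ⟨u, hu, rfl⟩ := he
      rw [hDfin, Finset.mem_filter] at hu
      rw [SimpleGraph.mem_edgeFinset, SimpleGraph.mem_edgeSet]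
      exact (hfc u hu.2).1
  -- an edge of E2fin has an endpoint of degree two
  have hE2endpoint : ∀ a b : W, s(a, b) ∈ E2fin → dg a = 2 ∨ dg b = 2 := by
    intro a b he
    simp only [hE2fin, Finset.mem_filter] at he
    obtain ⟨-, u, v, hequv, hdeg⟩ := he
    rw [Sym2.eq_iff] at hequv
    rcases hequv with ⟨rfl, rfl⟩ | ⟨rfl, rfl⟩
    · exact hdeg
    · exact hdeg.symm
  have hdisjE2B : Disjoint E2fin Bfin := by
    rw [Finset.disjoint_right]
    intro e heB heE2
    rw [hBfin, Finset.mem_image] at heB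
    obtain ⟨u, hu, rfl⟩ := heB
    rw [hDfin, Finset.mem_filter] at hu
    rcases hE2endpoint _ _ heE2 with h | h
    · exact hfxd u hu.2 h
    · exact hfyd u hu.2 h
  have hdisjE2X : Disjoint E2fin Xfin := by
    rw [Finset.disjoint_right]
    intro e heX heE2
    rw [hXfin, Finset.mem_image] at heX
    obtain ⟨u, hu, rfl⟩ := heX
    rw [hDfin, Finset.mem_filter] at hu
    rcases hE2endpoint _ _ heE2 with h | h
    · exact hfxd u hu.2 h
    · have hcu : fc u ≠ u := (hfc u hu.2).2.1
      exact (hkey u hu.2).2.2.2 (fc u) hcu h (hfc u hu.2).1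
  have hdisjBX : Disjoint Bfin Xfin := by
    rw [Finset.disjoint_right]
    intro e heX heB
    rw [hXfin, Finset.mem_image] at heX
    rw [hBfin, Finset.mem_image] at heB
    obtain ⟨u, hu, rfl⟩ := heX
    obtain ⟨u', hu', heq⟩ := heB
    rw [hDfin, Finset.mem_filter] at hu hu'
    rw [Sym2.eq_iff] at heq
    rcases heq with ⟨h1, h2⟩ | ⟨h1, h2⟩
    · have huu : u' = u := hfxinj u' u hu'.2 hu.2 h1
      exact (hfc u hu.2).2.2 ((huu ▸ h2).symm)
    · by_cases huu : u' = u
      · exact ((hfc u hu.2).1.ne) (huu ▸ h1)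
      · exact (hkey u hu.2).2.2.2 u' huu hu'.2 (h2 ▸ (hfyN u' hu'.2).symm)
  have hBcard : Bfin.card = d := by
    rw [hBfin, hd]
    rw [Finset.card_image_of_injOn]
    intro a ha b hb he
    simp only [hDfin, Finset.mem_coe, Finset.mem_filter, Finset.mem_univ, true_and] at ha hb
    simp only [Sym2.eq_iff] at he
    by_contra hne
    rcases he with ⟨h1, h2⟩ | ⟨h1, h2⟩
    · exact (hkey b hb).2.2.2 a hne ha (h1 ▸ (hfxN a ha).symm)
    · exact (hkey b hb).2.2.2 a hne ha (h2 ▸ (hfyN a ha).symm)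
  have hXcard : d ≤ 2 * Xfin.card := by
    rw [hd, hXfin]
    refine Finset.card_le_mul_card_image Dfin 2 ?_
    intro b hb
    rw [Finset.mem_image] at hb
    obtain ⟨u0, hu0, rfl⟩ := hb
    refine le_trans (Finset.card_le_card_of_injOn (t := {fx u0, fc u0}) fx ?_ ?_) ?_
    · intro u hu
      simp only [Finset.mem_coe, Finset.mem_filter] at hu
      have h2 := hu.2
      simp only [Sym2.eq_iff] at h2
      rcases h2 with ⟨h1, h2⟩ | ⟨h1, h2⟩
      · rw [h1]; exact Finset.mem_insert_self _ _
      · rw [h1]; exact Finset.mem_insert_of_mem (Finset.mem_singleton_self _)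
    · intro a ha b hb he
      simp only [Finset.coe_filter, Set.mem_setOf_eq, hDfin, Finset.mem_filter,
        Finset.mem_univ, true_and] at ha hb
      exact hfxinj a b ha.1 hb.1 he
    · exact Finset.card_insert_le _ _ |>.trans (by simp)
  have hunion : (E2fin ∪ Bfin ∪ Xfin).card = E2fin.card + Bfin.card + Xfin.card := by
    have h1 : Disjoint (E2fin ∪ Bfin) Xfin := by
      rw [Finset.disjoint_union_left]
      exact ⟨hdisjE2X, hdisjBX⟩
    rw [Finset.card_union_of_disjoint h1, Finset.card_union_of_disjoint hdisjE2B]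
  have hEtotal : E2fin.card + d + Xfin.card ≤ G.edgeFinset.card := by
    rw [← hBcard]
    calc E2fin.card + Bfin.card + Xfin.card = (E2fin ∪ Bfin ∪ Xfin).card := hunion.symm
      _ ≤ G.edgeFinset.card := Finset.card_le_card hEsub
  -- conversion to set-ncard
  have hE2set : {e ∈ G.edgeSet | ∃ u v : W, e = s(u, v) ∧
      ((G.neighborSet u).ncard = 2 ∨ (G.neighborSet v).ncard = 2)} = ↑E2fin := by
    ext e
    simp only [hE2fin, Set.mem_setOf_eq, Finset.coe_filter, SimpleGraph.mem_edgeFinset]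
    exact Iff.rfl
  have hEset : G.edgeSet.ncard = G.edgeFinset.card := by
    rw [← SimpleGraph.coe_edgeFinset, Set.ncard_coe_finset]
  rw [hE2set, Set.ncard_coe_finset, hEset]
  exact ⟨hbound1, by omega⟩

end Counting

section Final
variable {V : Type*} [Fintype V] {H : SimpleGraph V}

lemma G_F1 (hconn : (_root_.starGraph H).Connected)
    (hnd : ¬ Nonempty (_root_.starGraph H ≃g diamond))
    (hnt : ¬ Nonempty (_root_.starGraph H ≃g (⊤ : SimpleGraph (Fin 3))))
    (u : ↥(maxStars H)) (hdeg : ((_root_.starGraph H).neighborSet u).ncard = 2) :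
    ∃ x, (_root_.starGraph H).Adj u x ∧ 3 ≤ ((_root_.starGraph H).neighborSet x).ncard ∧
      ∀ w', w' ≠ u → ((_root_.starGraph H).neighborSet w').ncard = 2 →
        ¬ (_root_.starGraph H).Adj x w' := by
  obtain ⟨t, r, htr, hNu⟩ := Set.ncard_eq_two.mp hdeg
  have cfg := mk_cfg hNu htr
  obtain ⟨v, L, hstarS, hrepS⟩ := u.2.1
  have hAdjut : (_root_.starGraph H).Adj u t := by
    have : t ∈ (_root_.starGraph H).neighborSet u := by rw [hNu]; exact Set.mem_insert _ _
    exact this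
  have hAdjur : (_root_.starGraph H).Adj u r := by
    have : r ∈ (_root_.starGraph H).neighborSet u := by
      rw [hNu]; exact Set.mem_insert_of_mem _ rfl
    exact this
  rcases cfg.center_mem hstarS hrepS with hvT | hvR
  · obtain ⟨h3, hexcl⟩ := G_F1_aux hconn hnd hnt hNu htr hstarS hrepS hvT
    exact ⟨t, hAdjut, h3, hexcl⟩
  · have hNu' : (_root_.starGraph H).neighborSet u = {r, t} := by rw [hNu, Set.pair_comm]
    obtain ⟨h3, hexcl⟩ := G_F1_aux hconn hnd hnt hNu' htr.symm hstarS hrepS hvR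
    exact ⟨r, hAdjur, h3, hexcl⟩


end Final

/-- For a connected star graph `G` not isomorphic to a diamond or a triangle, the set
`E₂(G)` of edges incident to a degree-two vertex satisfies
`|E₂(G)| ≤ min (|V(G)| - 1) ((4/7)|E(G)|)`. -/
theorem stmt16 {V : Type*} [Fintype V] (H : SimpleGraph V)
    (hconn : (_root_.starGraph H).Connected)
    (hnd : ¬ Nonempty (_root_.starGraph H ≃g diamond))
    (hnt : ¬ Nonempty (_root_.starGraph H ≃g (⊤ : SimpleGraph (Fin 3)))) :
    ({e ∈ (_root_.starGraph H).edgeSet | ∃ u v : ↥(maxStars H), e = s(u, v) ∧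
        (((_root_.starGraph H).neighborSet u).ncard = 2 ∨
          ((_root_.starGraph H).neighborSet v).ncard = 2)}.ncard
        ≤ (maxStars H).ncard - 1) ∧
      7 * ({e ∈ (_root_.starGraph H).edgeSet | ∃ u v : ↥(maxStars H), e = s(u, v) ∧
        (((_root_.starGraph H).neighborSet u).ncard = 2 ∨
          ((_root_.starGraph H).neighborSet v).ncard = 2)}.ncard)
        ≤ 4 * (_root_.starGraph H).edgeSet.ncard := by
  classical
  haveI : Fintype ↥(maxStars H) := Fintype.ofFinite _
  have hcard : (maxStars H).ncard = Fintype.card ↥(maxStars H) := by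
    rw [← Nat.card_coe_set_eq, Nat.card_eq_fintype_card]
  rw [hcard]
  exact counting (_root_.starGraph H) (fun u t r hN htr => G_F3 hN htr)
    (fun u hdeg => G_F1 hconn hnd hnt u hdeg)
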